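/- arXiv:2308.13130 — 4 statements merged into one kernel-verified Lean document; each statement's English description precedes it below -/
import Mathlib

section
/- Let H be a realization of a degree sequence π, let G₂ be a graph on the same vertex set, and suppose H + G₂ is a near-packing with respect to a vertex y (every common edge of H and G₂ is incident to y). If some vertex l with degree 0 in H is not adjacent in G₂ to any vertex of N_H(y), then swapping the neighborhoods of y and l in H (a vertex interchange) yields a realization of π that is edge-disjoint from G₂. -/
open SimpleGraph

attribute [local instance] Classical.propDecidable

theorem statement_8 {V : Type} [Fintype V] [DecidableEq V]
    (H G₂ : SimpleGraph V) (y l : V)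
    (hnear : ∀ u v, H.Adj u v → G₂.Adj u v → u = y ∨ v = y)
    (hl : H.degree l = 0)
    (hnadj : ∀ u, H.Adj y u → ¬ G₂.Adj l u) :
    (∃ e : V ≃ V,
      ∀ v, (H.map (Equiv.swap y l).toEmbedding).degree v = H.degree (e v)) ∧
    Disjoint (H.map (Equiv.swap y l).toEmbedding).edgeSet G₂.edgeSet := by
  have hlnone : ∀ u, ¬ H.Adj l u := by
    intro u hu
    have hmem : u ∈ H.neighborFinset l := (SimpleGraph.mem_neighborFinset H l u).mpr hu
    have := Finset.card_eq_zero.mp hl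
    rw [this] at hmem
    exact absurd hmem (Finset.notMem_empty u)
  set σ := Equiv.swap y l with hσ
  have hmap : ∀ a b, (H.map σ.toEmbedding).Adj a b ↔ H.Adj (σ a) (σ b) := by
    intro a b
    constructor
    · rintro ⟨-, u, v, huv, hu, hv⟩
      have hu' : σ a = u := by
        rw [← hu]; simp [hσ]
      have hv' : σ b = v := by
        rw [← hv]; simp [hσ]
      rwa [hu', hv']
    · intro h
      exact ⟨fun hab => h.ne (by rw [hab]), σ a, σ b, h, by simp [hσ], by simp [hσ]⟩
  constructor
  · refine ⟨σ, fun v => ?_⟩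
    have hset : (H.map σ.toEmbedding).neighborFinset v
        = (H.neighborFinset (σ v)).image σ := by
      ext u
      simp only [SimpleGraph.mem_neighborFinset, Finset.mem_image]
      rw [hmap]
      constructor
      · intro h
        exact ⟨σ u, h, by simp [hσ]⟩
      · rintro ⟨w, hw, rfl⟩
        simpa [hσ] using hw
    rw [SimpleGraph.degree, SimpleGraph.degree, hset,
      Finset.card_image_of_injective _ σ.injective]
  · rw [Set.disjoint_left]
    rintro e he he₂
    induction e using Sym2.ind with
    | _ a b =>
      rw [SimpleGraph.mem_edgeSet] at he he₂
      rw [hmap] at he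
      -- cases on a, b vs y, l
      by_cases hay : a = y
      · subst hay
        simp [hσ, Equiv.swap_apply_left] at he
        exact hlnone _ he
      by_cases hby : b = y
      · subst hby
        simp [hσ, Equiv.swap_apply_left] at he
        exact hlnone _ he.symm
      by_cases hal : a = l
      · have ha : σ a = y := by rw [hσ, hal, Equiv.swap_apply_right]
        by_cases hbl : b = l
        · have hb : σ b = y := by rw [hσ, hbl, Equiv.swap_apply_right]
          rw [ha, hb] at he
          exact he.ne rfl
        · have hb : σ b = b := by
            rw [hσ]; exact Equiv.swap_apply_of_ne_of_ne hby hbl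
          rw [ha, hb] at he
          exact hnadj b he (hal ▸ he₂)
      by_cases hbl : b = l
      · have hb : σ b = y := by rw [hσ, hbl, Equiv.swap_apply_right]
        have ha : σ a = a := by
          rw [hσ]; exact Equiv.swap_apply_of_ne_of_ne hay hal
        rw [ha, hb] at he
        exact hnadj a he.symm (hbl ▸ he₂).symm
      · have ha : σ a = a := Equiv.swap_apply_of_ne_of_ne hay hal
        have hb : σ b = b := Equiv.swap_apply_of_ne_of_ne hby hbl
        rw [ha, hb] at he
        rcases hnear a b he he₂ with h | h
        · exact hay h
        · exact hby h
end

section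
/- For Δ₂ ≤ Δ₁, the graph G₁ = K^{Δ₁+1} ∪ I^{Δ₁Δ₂−1} (a clique plus Δ₁Δ₂−1 isolated vertices) does not pack with G₂ = Δ₁K^{Δ₂+1} (Δ₁ disjoint cliques of size Δ₂+1); equivalently, no realization of the degree sequence of G₁ is edge-disjoint from G₂. -/
open SimpleGraph

attribute [local instance] Classical.propDecidable

theorem statement_15 (Δ₁ Δ₂ : ℕ) (h1 : 1 ≤ Δ₂) (h2 : Δ₂ ≤ Δ₁) :
    ¬ ∃ H : SimpleGraph (Fin Δ₁ × Fin (Δ₂ + 1)),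
      (∀ v, H.degree v = Δ₁ ∨ H.degree v = 0) ∧
      (Finset.univ.filter fun v => H.degree v = Δ₁).card = Δ₁ + 1 ∧
      Disjoint H.edgeSet
        (SimpleGraph.fromRel fun a b : Fin Δ₁ × Fin (Δ₂ + 1) =>
          a.1 = b.1).edgeSet := by
  rintro ⟨H, hdeg, hcard, hdisj⟩
  set S := Finset.univ.filter fun v => H.degree v = Δ₁ with hS
  have hΔ₁pos : 1 ≤ Δ₁ := le_trans h1 h2
  -- every neighbor of anyone is in S
  have hnbr : ∀ v w, H.Adj v w → w ∈ S := by
    intro v w hvw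
    simp only [hS, Finset.mem_filter, Finset.mem_univ, true_and]
    rcases hdeg w with h | h
    · exact h
    · exfalso
      have : v ∈ H.neighborFinset w := by
        rw [SimpleGraph.mem_neighborFinset]; exact hvw.symm
      have := Finset.card_pos.mpr ⟨v, this⟩
      rw [← SimpleGraph.degree] at this
      omega
  -- every vertex in S is adjacent to every other vertex of S
  have hadj : ∀ a ∈ S, ∀ b ∈ S, a ≠ b → H.Adj a b := by
    intro a ha b hb hab
    have hda : H.degree a = Δ₁ := (Finset.mem_filter.mp ha).2
    have hsub : H.neighborFinset a ⊆ S.erase a := by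
      intro w hw
      rw [SimpleGraph.mem_neighborFinset] at hw
      exact Finset.mem_erase.mpr ⟨fun h => H.loopless.irrefl a (h ▸ hw), hnbr a w hw⟩
    have hce : (S.erase a).card = Δ₁ := by
      rw [Finset.card_erase_of_mem ha, hcard]
      omega
    have heq : H.neighborFinset a = S.erase a :=
      Finset.eq_of_subset_of_card_le hsub (by rw [hce, H.card_neighborFinset_eq_degree, hda])
    have : b ∈ H.neighborFinset a := by
      rw [heq]; exact Finset.mem_erase.mpr ⟨hab.symm, hb⟩
    rwa [SimpleGraph.mem_neighborFinset] at this
  -- first coordinates on S are pairwise distinct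
  have hinj : Set.InjOn (fun v : Fin Δ₁ × Fin (Δ₂ + 1) => v.1) S := by
    intro a ha b hb hab
    by_contra hne
    have hAdj := hadj a ha b hb hne
    have h1' : s(a, b) ∈ H.edgeSet := hAdj
    have h2' : s(a, b) ∈ (SimpleGraph.fromRel fun a b : Fin Δ₁ × Fin (Δ₂ + 1) =>
        a.1 = b.1).edgeSet := by
      rw [SimpleGraph.mem_edgeSet]
      exact ⟨hne, Or.inl hab⟩
    exact Set.disjoint_left.mp hdisj h1' h2'
  have hle : S.card ≤ Δ₁ := by
    calc S.card = (S.image fun v => v.1).card := (Finset.card_image_of_injOn hinj).symm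
    _ ≤ Fintype.card (Fin Δ₁) := Finset.card_le_univ _
    _ = Δ₁ := Fintype.card_fin _
  omega
end

section
/- Let G be a simple graph with no K^{Δ(G)+1} subgraph and, if Δ(G) = 2, no odd cycle. Then the independence number of G satisfies α(G) ≥ ⌈n/Δ(G)⌉, where n is the number of vertices and Δ(G) ≥ 1. -/
open SimpleGraph

attribute [local instance] Classical.propDecidable

namespace Statement17

variable {V : Type} (G : SimpleGraph V)

/-- Connectivity within a finset: a walk whose support stays in `s`. -/
def Conn (s : Finset V) (u v : V) : Prop :=
  ∃ p : G.Walk u v, ∀ x ∈ p.support, x ∈ s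

variable {G}

lemma Conn.mem_left {s : Finset V} {u v : V} (h : Conn G s u v) : u ∈ s := by
  obtain ⟨p, hp⟩ := h; exact hp u p.start_mem_support

lemma Conn.mem_right {s : Finset V} {u v : V} (h : Conn G s u v) : v ∈ s := by
  obtain ⟨p, hp⟩ := h; exact hp v p.end_mem_support

lemma Conn.refl {s : Finset V} {u : V} (h : u ∈ s) : Conn G s u u :=
  ⟨Walk.nil, by simp [h]⟩

lemma Conn.symm {s : Finset V} {u v : V} (h : Conn G s u v) : Conn G s v u := by
  obtain ⟨p, hp⟩ := h
  exact ⟨p.reverse, by simpa using hp⟩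

lemma Conn.trans {s : Finset V} {u v w : V} (h : Conn G s u v) (h' : Conn G s v w) :
    Conn G s u w := by
  obtain ⟨p, hp⟩ := h; obtain ⟨q, hq⟩ := h'
  refine ⟨p.append q, ?_⟩
  intro x hx
  rcases (Walk.mem_support_append_iff _ _).1 hx with h | h
  · exact hp x h
  · exact hq x h

lemma Conn.adj {s : Finset V} {u v : V} (h : G.Adj u v) (hu : u ∈ s) (hv : v ∈ s) :
    Conn G s u v :=
  ⟨h.toWalk, by simp [hu, hv]⟩

lemma Conn.mono {s t : Finset V} (hst : s ⊆ t) {u v : V} (h : Conn G s u v) : Conn G t u v := by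
  obtain ⟨p, hp⟩ := h; exact ⟨p, fun x hx => hst (hp x hx)⟩

/-- Truncation of a walk at the first entrance to a forbidden set `F`. -/
lemma trunc {T F : Finset V} {u t0 : V} (w : G.Walk u t0) (hT : ∀ x ∈ w.support, x ∈ T)
    (hu : u ∉ F) (ht : t0 ∈ F) :
    ∃ t ∈ F, ∃ p, G.Adj p t ∧ ∃ w' : G.Walk u p, ∀ x ∈ w'.support, x ∈ T ∧ x ∉ F := by
  induction w with
  | nil => exact absurd ht hu
  | @cons a b c h w ih =>
    by_cases hb : b ∈ F
    · exact ⟨b, hb, a, h, Walk.nil, by simp [hT a (by simp), hu]⟩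
    · have hT' : ∀ x ∈ w.support, x ∈ T := fun x hx => hT x (by simp [hx])
      obtain ⟨t, htF, p, hadj, w', hw'⟩ := ih hT' hb ht
      refine ⟨t, htF, p, hadj, Walk.cons h w', ?_⟩
      intro x hx
      rcases List.mem_cons.1 (by simpa using hx) with rfl | hx
      · exact ⟨hT x (by simp), hu⟩
      · exact hw' x hx

/-- A walk from inside `r` to outside `r` crosses the boundary. -/
lemma crossing {r : Finset V} {u v : V} (w : G.Walk u v) (hu : u ∈ r) (hv : v ∉ r) :
    ∃ p q, G.Adj p q ∧ p ∈ r ∧ q ∉ r ∧ p ∈ w.support ∧ q ∈ w.support := by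
  induction w with
  | nil => exact absurd hu hv
  | @cons a b c h w ih =>
    by_cases hb : b ∈ r
    · obtain ⟨p, q, h1, h2, h3, h4, h5⟩ := ih hb hv
      exact ⟨p, q, h1, h2, h3, by simp [h4], by simp [h5]⟩
    · exact ⟨a, b, h, hu, hb, by simp, by simp⟩

lemma conn_of_mem_support {s : Finset V} {u v : V} (w : G.Walk u v)
    (hs : ∀ x ∈ w.support, x ∈ s) : ∀ x ∈ w.support, Conn G s u x := by
  classical
  intro x hx
  exact ⟨w.takeUntil x hx, fun y hy => hs y (Walk.support_takeUntil_subset _ _ hy)⟩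

/-! ### mex and greedy coloring -/

noncomputable def mex (s : Finset ℕ) : ℕ := sInf {n : ℕ | n ∉ s}

lemma mex_not_mem (s : Finset ℕ) : mex s ∉ s := by
  have hne : {n : ℕ | n ∉ s}.Nonempty := by
    refine ⟨(s.sup id) + 1, fun hmem => ?_⟩
    have := Finset.le_sup (f := id) hmem
    simp only [id] at this
    omega
  exact Nat.sInf_mem hne

lemma mex_empty : mex (∅ : Finset ℕ) = 0 := by
  have : ({n : ℕ | n ∉ (∅ : Finset ℕ)} : Set ℕ) = Set.univ := by ext n; simp
  rw [mex, this]
  simp [Nat.sInf_eq_zero]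

lemma mex_le_card (s : Finset ℕ) : mex s ≤ s.card := by
  by_contra h
  push_neg at h
  have hsub : Finset.range (s.card + 1) ⊆ s := by
    intro k hk
    simp only [Finset.mem_range] at hk
    have hklt : k < mex s := lt_of_lt_of_le hk h
    have := Nat.notMem_of_lt_sInf (s := {n : ℕ | n ∉ s}) hklt
    simpa using this
  have := Finset.card_le_card hsub
  rw [Finset.card_range] at this
  omega

variable (G)

noncomputable def greedy : List V → V → ℕ
  | [], _ => 0
  | a :: t, v => if v = a then
      mex (((t.filter (fun u => G.Adj a u)).map (greedy t)).toFinset)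
    else greedy t v

variable {G}

lemma greedy_cons_ne {a v : V} {t : List V} (h : v ≠ a) :
    greedy G (a :: t) v = greedy G t v := by
  simp [greedy, h]

lemma greedy_cons_self (a : V) (t : List V) :
    greedy G (a :: t) a = mex (((t.filter (fun u => G.Adj a u)).map (greedy G t)).toFinset) := by
  simp [greedy]

lemma greedy_append_of_not_mem {v : V} : ∀ {l1 l2 : List V}, v ∉ l1 →
    greedy G (l1 ++ l2) v = greedy G l2 v := by
  intro l1
  induction l1 with
  | nil => simp
  | cons a t ih =>
    intro l2 hv
    have hva : v ≠ a := fun h => hv (by simp [h])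
    have hvt : v ∉ t := fun h => hv (by simp [h])
    rw [List.cons_append, greedy_cons_ne hva, ih hvt]

lemma greedy_proper : ∀ {l : List V}, l.Nodup → ∀ {u v : V}, u ∈ l → v ∈ l → G.Adj u v →
    greedy G l u ≠ greedy G l v := by
  intro l
  induction l with
  | nil => intro _ u v h; simp at h
  | cons a t ih =>
    intro hnd u v hu hv hadj
    have hnd' : t.Nodup := (List.nodup_cons.1 hnd).2
    have hat : a ∉ t := (List.nodup_cons.1 hnd).1
    by_cases hua : u = a <;> by_cases hva : v = a
    · subst hua; subst hva; exact absurd hadj (G.irrefl)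
    · -- u = a, v ∈ t
      subst hua
      have hvt : v ∈ t := (List.mem_cons.1 hv).resolve_left hva
      rw [greedy_cons_self, greedy_cons_ne hva]
      intro heq
      apply mex_not_mem (((t.filter (fun x => G.Adj u x)).map (greedy G t)).toFinset)
      rw [heq]
      simp only [List.mem_toFinset, List.mem_map]
      exact ⟨v, List.mem_filter.2 ⟨hvt, by simpa using hadj⟩, rfl⟩
    · -- v = a, u ∈ t
      subst hva
      have hut : u ∈ t := (List.mem_cons.1 hu).resolve_left hua
      rw [greedy_cons_self, greedy_cons_ne hua]
      intro heq
      apply mex_not_mem (((t.filter (fun x => G.Adj v x)).map (greedy G t)).toFinset)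
      rw [← heq]
      simp only [List.mem_toFinset, List.mem_map]
      exact ⟨u, List.mem_filter.2 ⟨hut, by simpa using hadj.symm⟩, rfl⟩
    · have hut : u ∈ t := (List.mem_cons.1 hu).resolve_left hua
      have hvt : v ∈ t := (List.mem_cons.1 hv).resolve_left hva
      rw [greedy_cons_ne hua, greedy_cons_ne hva]
      exact ih hnd' hut hvt hadj

lemma greedy_head_le (a : V) (t : List V) :
    greedy G (a :: t) a ≤ (t.filter (fun u => G.Adj a u)).length := by
  rw [greedy_cons_self]
  exact le_trans (mex_le_card _) (le_trans (List.toFinset_card_le _) (by simp))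

lemma greedy_head_lt_of_collision {a x y : V} {t : List V} (hx : x ∈ t) (hy : y ∈ t)
    (hxy : x ≠ y) (hax : G.Adj a x) (hay : G.Adj a y)
    (hcol : greedy G t x = greedy G t y) :
    greedy G (a :: t) a + 1 ≤ (t.filter (fun u => G.Adj a u)).length := by
  rw [greedy_cons_self]
  set f := t.filter (fun u => G.Adj a u) with hf
  have hxf : x ∈ f := List.mem_filter.2 ⟨hx, by simpa using hax⟩
  have hyf : y ∈ f := List.mem_filter.2 ⟨hy, by simpa using hay⟩
  have hsub : ((f.map (greedy G t)).toFinset : Finset ℕ) ⊆ ((f.erase x).map (greedy G t)).toFinset := by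
    intro n hn
    simp only [List.mem_toFinset, List.mem_map] at hn ⊢
    obtain ⟨u, huf, rfl⟩ := hn
    by_cases hux : u = x
    · subst hux
      exact ⟨y, (List.mem_erase_of_ne hxy.symm).2 hyf, hcol.symm⟩
    · exact ⟨u, (List.mem_erase_of_ne hux).2 huf, rfl⟩
  have h1 : mex ((f.map (greedy G t)).toFinset) ≤ (f.erase x).length :=
    le_trans (mex_le_card _) (le_trans (Finset.card_le_card hsub)
      (le_trans (List.toFinset_card_le _) (by simp)))
  have h2 : (f.erase x).length + 1 = f.length := by
    rw [List.length_erase_of_mem hxf]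
    have : f.length ≠ 0 := by
      intro h
      rw [List.length_eq_zero_iff] at h
      simp [h] at hxf
    omega
  omega

/-! ### Good colorings from greedy on lists -/

variable (G)

def Good (s : Finset V) (D : ℕ) (c : V → ℕ) : Prop :=
  (∀ u ∈ s, c u < D) ∧ ∀ u ∈ s, ∀ w ∈ s, G.Adj u w → c u ≠ c w

/-- Every non-distinguished vertex has a neighbour strictly earlier in the list. -/
def Peeled (l : List V) (v : V) : Prop :=
  ∀ l1 u l2, l = l1 ++ u :: l2 → u ≠ v → ∃ w ∈ l1, G.Adj u w

variable {G}

lemma good_of_list {s : Finset V} {D : ℕ} {l : List V} (hnd : l.Nodup) (hls : l.toFinset = s)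
    (hb : ∀ l1 u l2, l = l1 ++ u :: l2 → greedy G (u :: l2) u < D) :
    Good G s D (greedy G l) := by
  constructor
  · intro u hu
    rw [← hls, List.mem_toFinset] at hu
    obtain ⟨l1, l2, hdec⟩ := List.append_of_mem hu
    have hnd2 := hdec ▸ hnd
    have hu1 : u ∉ l1 := by
      rcases List.nodup_append.1 hnd2 with ⟨-, -, hdisj⟩
      intro hmem
      exact hdisj _ hmem _ (by simp) rfl
    rw [hdec, greedy_append_of_not_mem hu1]
    exact hb l1 u l2 hdec
  · intro u hu w hw hadj
    rw [← hls, List.mem_toFinset] at hu hw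
    exact greedy_proper hnd hu hw hadj

/-- Decompositions of `l ++ [p]`. -/
lemma append_singleton_cases {l l1 l2 : List V} {p u : V} (h : l ++ [p] = l1 ++ u :: l2) :
    (l1 = l ∧ u = p ∧ l2 = []) ∨ ∃ l2', l = l1 ++ u :: l2' ∧ l2 = l2' ++ [p] := by
  rcases List.eq_nil_or_concat l2 with rfl | ⟨l2', b, rfl⟩
  · left
    have hlen : l.length = l1.length := by
      have := congrArg List.length h
      simp at this
      omega
    obtain ⟨h1, h2⟩ := List.append_inj h hlen
    simp at h2
    exact ⟨h1.symm, h2.symm, rfl⟩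
  · right
    have h' : l ++ [p] = (l1 ++ u :: l2') ++ [b] := by
      simpa [List.concat_eq_append] using h
    have hlen : l.length = (l1 ++ u :: l2').length := by
      have := congrArg List.length h'
      simp at this ⊢
      omega
    obtain ⟨h1, h2⟩ := List.append_inj h' hlen
    simp at h2
    subst h2
    exact ⟨l2', h1, by simp [List.concat_eq_append]⟩

lemma peel {s : Finset V} {v : V} (hv : v ∈ s) (hconn : ∀ u ∈ s, Conn G s u v) :
    ∃ l : List V, l.Nodup ∧ l.toFinset = s ∧ l.head? = some v ∧ Peeled G l v := by
  suffices h : ∀ (n : ℕ) (r : Finset V) (l : List V), r.card = n → l.Nodup → l.head? = some v →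
      (∀ x, x ∈ s ↔ (x ∈ l ∨ x ∈ r)) → (∀ x ∈ l, x ∉ r) → Peeled G l v →
      ∃ l' : List V, l'.Nodup ∧ l'.toFinset = s ∧ l'.head? = some v ∧ Peeled G l' v by
    refine h (s.erase v).card (s.erase v) [v] rfl (by simp) rfl ?_ ?_ ?_
    · intro x
      by_cases hxv : x = v
      · simp [hxv, hv]
      · simp [hxv, Finset.mem_erase]
    · intro x hx
      simp at hx
      simp [hx]
    · intro l1 u l2 hdec hne
      have : l1 = [] := by
        cases l1 with
        | nil => rfl
        | cons a t =>
          exfalso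
          have := congrArg List.length hdec
          simp at this
      subst this
      simp at hdec
      exact absurd hdec.1.symm hne
  intro n
  induction n with
  | zero =>
    intro r l hcard hnd hhd hcover hlr _hpeel
    have hr : r = ∅ := Finset.card_eq_zero.1 hcard
    subst hr
    refine ⟨l, hnd, ?_, hhd, _hpeel⟩
    ext x
    rw [List.mem_toFinset, hcover x]
    simp
  | succ n ih =>
    intro r l hcard hnd hhd hcover hlr hpeel
    obtain ⟨u0, hu0⟩ : r.Nonempty := Finset.card_pos.1 (by omega)
    have hu0s : u0 ∈ s := (hcover u0).2 (Or.inr hu0)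
    obtain ⟨w, hw⟩ := hconn u0 hu0s
    have hvl : v ∈ l := List.mem_of_mem_head? (by simp [hhd])
    have hvr : v ∉ r := hlr v hvl
    obtain ⟨p, q, hpq, hpr, hqr, hps, hqs⟩ := crossing w hu0 hvr
    have hql : q ∈ l := ((hcover q).1 (hw q hqs)).resolve_right hqr
    have hpl : p ∉ l := fun h => hlr p h hpr
    have hps' : p ∈ s := hw p hps
    refine ih (r.erase p) (l ++ [p]) (by rw [Finset.card_erase_of_mem hpr]; omega)
      ?_ ?_ ?_ ?_ ?_
    · simp [List.nodup_append, hnd, List.Disjoint]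
      intro a ha hap
      exact hpl (hap ▸ ha)
    · rw [List.head?_append]
      cases l with
      | nil => simp at hhd
      | cons a t => simpa using hhd
    · intro x
      rw [hcover x]
      by_cases hxp : x = p
      · simp [hxp, hpr]
      · simp [hxp, Finset.mem_erase]
    · intro x hx
      simp at hx
      rcases hx with hx | rfl
      · simp [Finset.mem_erase]
        intro _; exact hlr x hx
      · simp
    · intro l1 u l2 hdec hne
      rcases append_singleton_cases hdec with ⟨rfl, rfl, rfl⟩ | ⟨l2', hdec', rfl⟩
      · exact ⟨q, hql, hpq⟩
      · obtain ⟨w', hw1, hw2⟩ := hpeel l1 u l2' hdec' hne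
        exact ⟨w', hw1, hw2⟩

/-! ### degree-bound helpers and the two greedy applications -/

lemma helperA {u : V} {l2 : List V} (hnd : l2.Nodup) {s : Finset V} (hsub : ∀ x ∈ l2, x ∈ s) :
    (l2.filter (fun x => G.Adj u x)).length ≤ (s.filter (fun x => G.Adj u x)).card := by
  rw [← List.toFinset_card_of_nodup (hnd.filter _)]
  apply Finset.card_le_card
  intro x hx
  simp only [List.mem_toFinset, List.mem_filter, decide_eq_true_eq, Finset.mem_filter] at hx ⊢
  exact ⟨hsub x hx.1, hx.2⟩

lemma helperB {u w : V} {l2 : List V} (hnd : l2.Nodup) {s : Finset V} (hsub : ∀ x ∈ l2, x ∈ s)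
    (hw : w ∉ l2) (hws : w ∈ s) (hadj : G.Adj u w) :
    (l2.filter (fun x => G.Adj u x)).length + 1 ≤ (s.filter (fun x => G.Adj u x)).card := by
  have hsubF : (l2.filter (fun x => G.Adj u x)).toFinset ⊆
      (s.filter (fun x => G.Adj u x)).erase w := by
    intro x hx
    simp only [List.mem_toFinset, List.mem_filter, decide_eq_true_eq] at hx
    rw [Finset.mem_erase]
    exact ⟨fun h => hw (h ▸ hx.1), Finset.mem_filter.2 ⟨hsub x hx.1, hx.2⟩⟩
  have h1 : (l2.filter (fun x => G.Adj u x)).length ≤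
      ((s.filter (fun x => G.Adj u x)).erase w).card := by
    rw [← List.toFinset_card_of_nodup (hnd.filter _)]
    exact Finset.card_le_card hsubF
  have hwmem : w ∈ s.filter (fun x => G.Adj u x) := Finset.mem_filter.2 ⟨hws, hadj⟩
  rw [Finset.card_erase_of_mem hwmem] at h1
  have : 1 ≤ (s.filter (fun x => G.Adj u x)).card := Finset.card_pos.2 ⟨w, hwmem⟩
  omega

lemma exists_good_of_nonregular {s : Finset V} {D : ℕ} {v : V} (hv : v ∈ s)
    (hconn : ∀ u ∈ s, Conn G s u v)
    (hdeg : ∀ u ∈ s, (s.filter (fun z => G.Adj u z)).card ≤ D)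
    (hdv : (s.filter (fun z => G.Adj v z)).card < D) :
    ∃ c, Good G s D c := by
  obtain ⟨l, hnd, hls, hhd, hpeel⟩ := peel hv hconn
  refine ⟨greedy G l, good_of_list hnd hls ?_⟩
  intro l1 u l2 hdec
  have hnd2 := hdec ▸ hnd
  obtain ⟨hnd1, hndc, hdisj⟩ := List.nodup_append.1 hnd2
  have hndl2 : l2.Nodup := (List.nodup_cons.1 hndc).2
  have hsub2 : ∀ x ∈ l2, x ∈ s := by
    intro x hx
    rw [← hls]
    simp [hdec, hx]
  by_cases huv : u = v
  · subst huv
    calc greedy G (u :: l2) u ≤ (l2.filter (fun x => G.Adj u x)).length := greedy_head_le u l2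
    _ ≤ (s.filter (fun x => G.Adj u x)).card := helperA hndl2 hsub2
    _ < D := hdv
  · obtain ⟨w, hwl1, hadj⟩ := hpeel l1 u l2 hdec huv
    have hws : w ∈ s := by rw [← hls]; simp [hdec, hwl1]
    have hwl2 : w ∉ l2 := fun h => hdisj _ hwl1 _ (by simp [h]) rfl
    have hu_s : u ∈ s := by rw [← hls]; simp [hdec]
    have := helperB hndl2 hsub2 hwl2 hws hadj
    have h2 := hdeg u hu_s
    have h3 := greedy_head_le (G := G) u l2
    omega

lemma exists_good_of_selection {s : Finset V} {D : ℕ} {v x y : V}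
    (hxs : x ∈ s) (hys : y ∈ s) (hxy : x ≠ y) (hnadj : ¬ G.Adj y x)
    (hvx : G.Adj v x) (hvy : G.Adj v y) (hvs : v ∈ (s.erase x).erase y)
    (hconn : ∀ u ∈ (s.erase x).erase y, Conn G ((s.erase x).erase y) u v)
    (hdeg : ∀ u ∈ s, (s.filter (fun z => G.Adj u z)).card ≤ D) (hD : 1 ≤ D) :
    ∃ c, Good G s D c := by
  obtain ⟨l, hnd, hls, hhd, hpeel⟩ := peel hvs hconn
  have hxl : x ∉ l := by
    intro h
    have := hls ▸ List.mem_toFinset.2 h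
    simp [Finset.mem_erase] at this
  have hyl : y ∉ l := by
    intro h
    have := hls ▸ List.mem_toFinset.2 h
    simp [Finset.mem_erase] at this
  have hsubl : ∀ z ∈ l, z ∈ s := by
    intro z hz
    have := hls ▸ List.mem_toFinset.2 hz
    simp [Finset.mem_erase] at this
    exact this.2.2
  have hndL : (l ++ [y, x]).Nodup := by
    rw [List.nodup_append]
    refine ⟨hnd, by simp [hxy.symm ], ?_⟩
    intro a ha b hamem
    simp at hamem
    rcases hamem with rfl | rfl
    · rintro rfl; exact hyl ha
    · rintro rfl; exact hxl ha
  have hlsL : (l ++ [y, x]).toFinset = s := by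
    ext z
    simp only [List.toFinset_append, Finset.mem_union, List.mem_toFinset, List.toFinset_cons,
      List.toFinset_nil, Finset.insert_empty, Finset.mem_insert, Finset.mem_singleton, hls]
    constructor
    · rintro (hz | rfl | rfl)
      · simp [Finset.mem_erase] at hz; exact hz.2.2
      · exact hys
      · exact hxs
    · intro hz
      by_cases hzx : z = x
      · tauto
      · by_cases hzy : z = y
        · tauto
        · left; simp [Finset.mem_erase, hzx, hzy, hz]
  refine ⟨greedy G (l ++ [y, x]), good_of_list hndL hlsL ?_⟩
  intro l1 u l2 hdec
  have hdec' : (l ++ [y]) ++ [x] = l1 ++ u :: l2 := by simpa using hdec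
  rcases append_singleton_cases hdec' with ⟨rfl, rfl, rfl⟩ | ⟨l2', hdec2, rfl⟩
  · -- u = x, last
    have := greedy_head_le (G := G) u ([] : List V)
    simp at this
    omega
  · rcases append_singleton_cases hdec2 with ⟨rfl, rfl, rfl⟩ | ⟨l2'', hdec3, rfl⟩
    · -- u = y, l2' = [], full tail = [x]
      simp only [List.nil_append]
      have hb := greedy_head_le (G := G) u [x]
      have : ([x].filter (fun z => G.Adj u z)).length = 0 := by
        simp [List.filter, hnadj]
      omega
    · -- u ∈ l, l = l1 ++ u :: l2''
      have huls : u ∈ s := hsubl u (by simp [hdec3])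
      set L2 : List V := l2'' ++ [y] ++ [x] with hL2
      have hndfull := hdec ▸ hndL
      obtain ⟨hnd1, hndc, hdisj⟩ := List.nodup_append.1 hndfull
      have hndL2 : L2.Nodup := (List.nodup_cons.1 hndc).2
      have hsubL2 : ∀ z ∈ L2, z ∈ s := by
        intro z hz
        simp only [hL2, List.mem_append, List.mem_singleton] at hz
        rcases hz with (hz | rfl) | rfl
        · exact hsubl z (by simp [hdec3, hz])
        · exact hys
        · exact hxs
      by_cases huv : u = v
      · subst huv
        -- collision bound: x and y both get colour 0 in L2
        have hxL2 : x ∈ L2 := by simp [hL2]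
        have hyL2 : y ∈ L2 := by simp [hL2]
        have hgx : greedy G L2 x = 0 := by
          have hxno : x ∉ l2'' ++ [y] := by
            simp only [List.mem_append, List.mem_singleton]
            rintro (h | rfl)
            · exact hxl (by simp [hdec3, h])
            · exact hxy rfl
          have : greedy G L2 x = greedy G [x] x := by
            rw [hL2, List.append_assoc]
            rw [show (l2'' ++ ([y] ++ [x])) = (l2'' ++ [y]) ++ [x] by simp]
            exact greedy_append_of_not_mem hxno
          rw [this, greedy_cons_self]
          simpa using mex_empty
        have hgy : greedy G L2 y = 0 := by
          have hyno : y ∉ l2'' := fun h => hyl (by simp [hdec3, h])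
          have e1 : greedy G L2 y = greedy G ([y] ++ [x]) y := by
            rw [hL2, List.append_assoc]
            exact greedy_append_of_not_mem hyno
          rw [e1]
          have : greedy G (y :: [x]) y =
              mex ((([x].filter (fun z => G.Adj y z)).map (greedy G [x])).toFinset) :=
            greedy_cons_self y [x]
          rw [show ([y] ++ [x] : List V) = y :: [x] by simp, this]
          have : ([x].filter (fun z => G.Adj y z)) = [] := by
            simp [List.filter, hnadj]
          rw [this]
          simpa using mex_empty
        have hcol := greedy_head_lt_of_collision (a := u) hxL2 hyL2 hxy hvx hvy
          (hgx.trans hgy.symm)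
        have hlen : (L2.filter (fun z => G.Adj u z)).length ≤
            (s.filter (fun z => G.Adj u z)).card := helperA hndL2 hsubL2
        have := hdeg u huls
        omega
      · obtain ⟨w, hwl1, hadj⟩ := hpeel l1 u l2'' hdec3 huv
        have hws : w ∈ s := hsubl w (by simp [hdec3, hwl1])
        have hwL2 : w ∉ L2 := by
          intro h
          exact hdisj _ hwl1 _ (by simp [h]) rfl
        have := helperB hndL2 hsubL2 hwL2 hws hadj
        have h2 := hdeg u huls
        have h3 := greedy_head_le (G := G) u L2
        omega

/-! ### recolouring, gluing, counting -/

lemma swap_lt {i j n D : ℕ} (hi : i < D) (hj : j < D) (hn : n < D) :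
    Equiv.swap i j n < D := by
  rcases eq_or_ne n i with rfl | hni
  · rwa [Equiv.swap_apply_left]
  rcases eq_or_ne n j with rfl | hnj
  · rwa [Equiv.swap_apply_right]
  · rwa [Equiv.swap_apply_of_ne_of_ne hni hnj]

lemma Good.comp_swap {s : Finset V} {D i j : ℕ} {c : V → ℕ} (h : Good G s D c)
    (hi : i < D) (hj : j < D) : Good G s D (fun z => Equiv.swap i j (c z)) := by
  refine ⟨fun u hu => swap_lt hi hj (h.1 u hu), fun u hu w hw hadj heq => ?_⟩
  exact h.2 u hu w hw hadj (Equiv.injective _ heq)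

lemma normalize_one {t : Finset V} {D : ℕ} {a : V} {c : V → ℕ} (ha : a ∈ t) (hD : 0 < D)
    (h : Good G t D c) (i : ℕ) (hi : i < D) :
    ∃ c', Good G t D c' ∧ c' a = i := by
  refine ⟨fun z => Equiv.swap i (c a) (c z), h.comp_swap hi (h.1 a ha), ?_⟩
  simp [Equiv.swap_apply_right]

lemma normalize_pair {t : Finset V} {D : ℕ} {a b : V} {c : V → ℕ} (ha : a ∈ t) (hb : b ∈ t)
    (hD : 2 ≤ D) (h : Good G t D c) (hne : c a ≠ c b) :
    ∃ c', Good G t D c' ∧ c' a = 0 ∧ c' b = 1 := by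
  have h1 : Good G t D (fun z => Equiv.swap 0 (c a) (c z)) :=
    h.comp_swap (by omega) (h.1 a ha)
  set c1 : V → ℕ := fun z => Equiv.swap 0 (c a) (c z) with hc1
  have hc1a : c1 a = 0 := by simp [hc1, Equiv.swap_apply_right]
  have hc1ne : c1 b ≠ 0 := by
    rw [← hc1a]
    intro heq
    exact hne (Equiv.injective _ heq).symm
  refine ⟨fun z => Equiv.swap 1 (c1 b) (c1 z), h1.comp_swap (by omega) (h1.1 b hb), ?_, ?_⟩
  · simp only [hc1a]
    rw [Equiv.swap_apply_of_ne_of_ne (by omega) (Ne.symm hc1ne)]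
  · simp [Equiv.swap_apply_right]

lemma glue_one {s t t' : Finset V} {D : ℕ} {a : V} (hunion : t ∪ t' = s)
    (hinter : t ∩ t' = {a})
    (hcross : ∀ u ∈ t, ∀ w ∈ t', G.Adj u w → u = a ∨ w = a) (hD : 0 < D)
    (h1 : ∃ c, Good G t D c) (h2 : ∃ c, Good G t' D c) : ∃ c, Good G s D c := by
  obtain ⟨c1, hc1⟩ := h1
  have ha : a ∈ t ∧ a ∈ t' := by
    have := hinter ▸ (Finset.mem_singleton_self a)
    exact Finset.mem_inter.1 this
  obtain ⟨c2', hc2'⟩ := h2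
  obtain ⟨c2, hc2, hc2a⟩ := normalize_one ha.2 hD hc2' (c1 a) (hc1.1 a ha.1)
  refine ⟨fun z => if z ∈ t then c1 z else c2 z, ?_, ?_⟩
  · intro u hu
    by_cases hut : u ∈ t
    · simpa [hut] using hc1.1 u hut
    · have hut' : u ∈ t' := by
        rcases Finset.mem_union.1 (hunion ▸ hu) with h | h
        · exact absurd h hut
        · exact h
      simpa [hut] using hc2.1 u hut'
  · intro u hu w hw hadj
    have hu' := Finset.mem_union.1 (hunion ▸ hu)
    have hw' := Finset.mem_union.1 (hunion ▸ hw)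
    by_cases hut : u ∈ t <;> by_cases hwt : w ∈ t <;> simp only [hut, hwt, if_true, if_false,
      ite_true, ite_false]
    · exact hc1.2 u hut w hwt hadj
    · -- u ∈ t, w ∉ t hence w ∈ t'
      have hwt' : w ∈ t' := hw'.resolve_left hwt
      rcases hcross u hut w hwt' hadj with h | h
      · rw [h, ← hc2a]
        exact hc2.2 a ha.2 w hwt' (h ▸ hadj)
      · exact absurd (h.symm ▸ ha.1 : w ∈ t) hwt
    · have hut' : u ∈ t' := hu'.resolve_left hut
      rcases hcross w hwt u hut' hadj.symm with h | h
      · rw [h, ← hc2a]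
        exact (hc2.2 a ha.2 u hut' (h ▸ hadj.symm)).symm
      · exact absurd (h.symm ▸ ha.1 : u ∈ t) hut
    · exact hc2.2 u (hu'.resolve_left hut) w (hw'.resolve_left hwt) hadj

lemma glue_two {s t t' : Finset V} {D : ℕ} {a b : V} (hunion : t ∪ t' = s)
    (hinter : t ∩ t' = {a, b}) (hadj : G.Adj a b)
    (hcross : ∀ u ∈ t, ∀ w ∈ t', G.Adj u w → u = a ∨ u = b ∨ w = a ∨ w = b) (hD : 2 ≤ D)
    (h1 : ∃ c, Good G t D c) (h2 : ∃ c, Good G t' D c) : ∃ c, Good G s D c := by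
  have hat : a ∈ t ∧ a ∈ t' := by
    have : a ∈ t ∩ t' := by rw [hinter]; simp
    exact Finset.mem_inter.1 this
  have hbt : b ∈ t ∧ b ∈ t' := by
    have : b ∈ t ∩ t' := by rw [hinter]; simp
    exact Finset.mem_inter.1 this
  obtain ⟨c1', hc1'⟩ := h1
  obtain ⟨c2', hc2'⟩ := h2
  obtain ⟨c1, hc1, hc1a, hc1b⟩ := normalize_pair hat.1 hbt.1 hD hc1'
    (hc1'.2 a hat.1 b hbt.1 hadj)
  obtain ⟨c2, hc2, hc2a, hc2b⟩ := normalize_pair hat.2 hbt.2 hD hc2'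
    (hc2'.2 a hat.2 b hbt.2 hadj)
  refine ⟨fun z => if z ∈ t then c1 z else c2 z, ?_, ?_⟩
  · intro u hu
    by_cases hut : u ∈ t
    · simpa [hut] using hc1.1 u hut
    · have hut' : u ∈ t' := (Finset.mem_union.1 (hunion ▸ hu)).resolve_left hut
      simpa [hut] using hc2.1 u hut'
  · intro u hu w hw hadj'
    have hu' := Finset.mem_union.1 (hunion ▸ hu)
    have hw' := Finset.mem_union.1 (hunion ▸ hw)
    by_cases hut : u ∈ t <;> by_cases hwt : w ∈ t <;> simp only [hut, hwt, if_true, if_false,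
      ite_true, ite_false]
    · exact hc1.2 u hut w hwt hadj'
    · have hwt' : w ∈ t' := hw'.resolve_left hwt
      rcases hcross u hut w hwt' hadj' with h | h | h | h
      · rw [h, hc1a, ← hc2a]
        exact hc2.2 a hat.2 w hwt' (h ▸ hadj')
      · rw [h, hc1b, ← hc2b]
        exact hc2.2 b hbt.2 w hwt' (h ▸ hadj')
      · exact absurd (h.symm ▸ hat.1 : w ∈ t) hwt
      · exact absurd (h.symm ▸ hbt.1 : w ∈ t) hwt
    · have hut' : u ∈ t' := hu'.resolve_left hut
      rcases hcross w hwt u hut' hadj'.symm with h | h | h | h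
      · rw [h, hc1a, ← hc2a]
        exact (hc2.2 a hat.2 u hut' (h ▸ hadj'.symm)).symm
      · rw [h, hc1b, ← hc2b]
        exact (hc2.2 b hbt.2 u hut' (h ▸ hadj'.symm)).symm
      · exact absurd (h.symm ▸ hat.1 : u ∈ t) hut
      · exact absurd (h.symm ▸ hbt.1 : u ∈ t) hut
    · exact hc2.2 u (hu'.resolve_left hut) w (hw'.resolve_left hwt) hadj'

lemma indep_of_good [Fintype V] {D : ℕ} (hD : 1 ≤ D) (c : V → ℕ)
    (h : Good G Finset.univ D c) :
    ∃ s : Finset V, (∀ a ∈ s, ∀ b ∈ s, ¬ G.Adj a b) ∧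
      (Fintype.card V + D - 1) / D ≤ s.card := by
  have hsum : (Finset.univ : Finset V).card =
      ∑ i ∈ Finset.range D, (Finset.univ.filter (fun u => c u = i)).card :=
    Finset.card_eq_sum_card_fiberwise (fun x _ => Finset.mem_range.2 (h.1 x (by simp)))
  obtain ⟨i, hi, hmax⟩ := Finset.exists_max_image (Finset.range D)
    (fun i => (Finset.univ.filter (fun u => c u = i)).card) ⟨0, by simp; omega⟩
  refine ⟨Finset.univ.filter (fun u => c u = i), ?_, ?_⟩
  · intro x hx y hy hadj
    simp only [Finset.mem_filter] at hx hy
    exact h.2 x (by simp) y (by simp) hadj (hx.2.trans hy.2.symm)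
  · have hle : (Finset.univ : Finset V).card ≤
        D * (Finset.univ.filter (fun u => c u = i)).card := by
      rw [hsum]
      calc ∑ j ∈ Finset.range D, (Finset.univ.filter (fun u => c u = j)).card
          ≤ ∑ _j ∈ Finset.range D, (Finset.univ.filter (fun u => c u = i)).card :=
            Finset.sum_le_sum (fun j hj => hmax j hj)
        _ = D * _ := by rw [Finset.sum_const, Finset.card_range, smul_eq_mul]
    rw [Nat.div_le_iff_le_mul_add_pred (by omega)]
    have : (Finset.univ : Finset V).card = Fintype.card V := rfl
    omega

/-! ### the selection lemma -/

section Selection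

variable {s : Finset V} {a b : V}

/-- L1: every vertex of `E = s \ {a,b}` has, in its `E`-component, a neighbour of `a`
(assuming `b` is not a cutvertex). -/
lemma nbr_in_component
    (hnocut : ∀ z ∈ s, ∀ p ∈ s.erase z, ∀ q ∈ s.erase z, Conn G (s.erase z) p q)
    (ha : a ∈ s) (hb : b ∈ s) (hab : a ≠ b) {z : V} (hz : z ∈ (s.erase a).erase b) :
    ∃ p, G.Adj a p ∧ Conn G ((s.erase a).erase b) z p := by
  obtain ⟨hzb, hza, hzs⟩ : z ≠ b ∧ z ≠ a ∧ z ∈ s := by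
    rw [Finset.mem_erase, Finset.mem_erase] at hz
    exact ⟨hz.1, hz.2⟩
  have hz' : z ∈ s.erase b := Finset.mem_erase.2 ⟨hzb, hzs⟩
  have ha' : a ∈ s.erase b := Finset.mem_erase.2 ⟨hab, ha⟩
  obtain ⟨w, hw⟩ := hnocut b hb z hz' a ha'
  obtain ⟨t, htF, p, hadj, w', hw'⟩ := trunc (T := s.erase b) (F := {a}) w hw
    (by simpa using hza) (by simp)
  simp only [Finset.mem_singleton] at htF
  subst htF
  refine ⟨p, hadj.symm, w', ?_⟩
  intro x hx
  obtain ⟨hx1, hx2⟩ := hw' x hx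
  simp only [Finset.mem_singleton] at hx2
  rw [Finset.mem_erase] at hx1
  rw [Finset.mem_erase, Finset.mem_erase]
  exact ⟨hx1.1, hx2, hx1.2⟩

/-- L2: from any vertex other than x,y one can reach a or b avoiding x,y
(y not connected to q in E). -/
lemma reach_a_or_b
    (hnocut : ∀ z ∈ s, ∀ p ∈ s.erase z, ∀ q ∈ s.erase z, Conn G (s.erase z) p q)
    (ha : a ∈ s) (hb : b ∈ s) (hab : a ≠ b) (hnadj : ¬ G.Adj a b) {x y q : V}
    (hx : x ∈ (s.erase a).erase b) (hy : y ∈ (s.erase a).erase b)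
    (hq : q ∈ (s.erase a).erase b) (hqx : q ≠ x) (hqy : q ≠ y)
    (hnconn : ¬ Conn G ((s.erase a).erase b) q y) :
    Conn G ((s.erase x).erase y) q a ∨ Conn G ((s.erase x).erase y) q b := by
  have hqE := Finset.mem_erase.1 hq
  have hqE2 := Finset.mem_erase.1 hqE.2
  have hxE := Finset.mem_erase.1 hx
  have hxE2 := Finset.mem_erase.1 hxE.2
  have hyE := Finset.mem_erase.1 hy
  have hyE2 := Finset.mem_erase.1 hyE.2
  -- walk from q to a inside s.erase x
  obtain ⟨w, hw⟩ := hnocut x hxE2.2 q (Finset.mem_erase.2 ⟨hqx, hqE2.2⟩) a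
    (Finset.mem_erase.2 ⟨fun h => hxE2.1 h.symm, ha⟩)
  obtain ⟨t, htF, p, hadj, w', hw'⟩ := trunc (T := s.erase x) (F := {a, b, y}) w hw
    (by simp [hqE2.1, hqE.1, hqy]) (by simp)
  have hw'E : ∀ z ∈ w'.support, z ∈ (s.erase x).erase y ∧ z ∈ (s.erase a).erase b := by
    intro z hz
    obtain ⟨hz1, hz2⟩ := hw' z hz
    simp only [Finset.mem_insert, Finset.mem_singleton, not_or] at hz2
    have hzs := Finset.mem_erase.1 hz1
    refine ⟨Finset.mem_erase.2 ⟨hz2.2.2, hz1⟩,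
      Finset.mem_erase.2 ⟨hz2.2.1, Finset.mem_erase.2 ⟨hz2.1, hzs.2⟩⟩⟩
  simp only [Finset.mem_insert, Finset.mem_singleton] at htF
  rcases htF with rfl | rfl | rfl
  · -- reached a
    left
    have hpss : p ∈ (s.erase x).erase y := (hw'E p w'.end_mem_support).1
    have hass : t ∈ (s.erase x).erase y := by
      rw [Finset.mem_erase, Finset.mem_erase]
      exact ⟨fun h => hyE2.1 h.symm, fun h => hxE2.1 h.symm, ha⟩
    refine ⟨w'.append hadj.toWalk, ?_⟩
    intro z hz
    rcases (Walk.mem_support_append_iff _ _).1 hz with h | h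
    · exact (hw'E z h).1
    · have : z = p ∨ z = t := by simpa using h
      rcases this with rfl | rfl
      · exact hpss
      · exact hass
  · -- reached b
    right
    have hbss : t ∈ (s.erase x).erase y := by
      rw [Finset.mem_erase, Finset.mem_erase]
      exact ⟨fun h => hyE.1 h.symm, fun h => hxE.1 h.symm, hb⟩
    refine ⟨w'.append hadj.toWalk, ?_⟩
    intro z hz
    rcases (Walk.mem_support_append_iff _ _).1 hz with h | h
    · exact (hw'E z h).1
    · have : z = p ∨ z = t := by simpa using h
      rcases this with rfl | rfl
      · exact (hw'E z w'.end_mem_support).1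
      · exact hbss
  · -- reached y : contradiction
    exfalso
    apply hnconn
    have hpE : p ∈ (s.erase a).erase b := (hw'E p w'.end_mem_support).2
    have : Conn G ((s.erase a).erase b) q p := ⟨w', fun z hz => (hw'E z hz).2⟩
    exact this.trans (Conn.adj hadj hpE hy)

end Selection

section Selection2

variable (G) in
/-- component of z in s∖{a,b}, together with a and b. -/
noncomputable def Kset (s : Finset V) (a b z : V) : Finset V :=
  ((s.erase a).erase b).filter (fun w => Conn G ((s.erase a).erase b) z w) ∪ {a, b}

lemma erase_erase_comm (s : Finset V) (a b : V) : (s.erase a).erase b = (s.erase b).erase a := by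
  ext z
  simp only [Finset.mem_erase]
  tauto

lemma walk_eq_of_length_zero {u v : V} (w : G.Walk u v) (h : w.length = 0) : u = v := by
  cases w with
  | nil => rfl
  | cons h p => simp at h

lemma two_separators {s : Finset V} {a b : V}
    (hnocut : ∀ z ∈ s, ∀ p ∈ s.erase z, ∀ q ∈ s.erase z, Conn G (s.erase z) p q)
    (ha : a ∈ s) (hb : b ∈ s) (hab : a ≠ b)
    {x1 x2 : V} (hx1 : x1 ∈ (s.erase a).erase b) (hx2 : x2 ∈ (s.erase a).erase b)
    (h12 : Conn G ((s.erase a).erase b) x1 x2) (hne : x1 ≠ x2)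
    (ha1 : G.Adj a x1) (ha2 : G.Adj a x2)
    (hb1 : ¬ Conn G ((Kset G s a b x1).erase x1) a b)
    (hb2 : ¬ Conn G ((Kset G s a b x1).erase x2) a b) : False := by
  set E := (s.erase a).erase b with hE
  set K := Kset G s a b x1 with hK
  have hmemE : ∀ z, z ∈ E ↔ (z ≠ b ∧ z ≠ a ∧ z ∈ s) := by
    intro z
    rw [hE, Finset.mem_erase, Finset.mem_erase]
  have hbK : b ∈ K := by rw [hK, Kset]; simp
  have haK : a ∈ K := by rw [hK, Kset]; simp
  have hfilterK : ∀ z, z ∈ E → Conn G E x1 z → z ∈ K := by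
    intro z h1 h2
    rw [hK, Kset]
    exact Finset.mem_union_left _ (Finset.mem_filter.2 ⟨h1, h2⟩)
  -- (i) K.erase a is connected to b
  have hKa : ∀ q ∈ K.erase a, Conn G (K.erase a) q b := by
    intro q hq
    obtain ⟨hqa, hqK⟩ := Finset.mem_erase.1 hq
    have hbKa : b ∈ K.erase a := Finset.mem_erase.2 ⟨Ne.symm hab, hbK⟩
    rcases Finset.mem_union.1 (hK ▸ hqK) with hqf | hqab
    · obtain ⟨hqE, hqconn⟩ := Finset.mem_filter.1 hqf
      -- q in the component of x1; find a neighbour p of b in that component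
      obtain ⟨p, hpadj, hpconn⟩ := nbr_in_component (a := b) (b := a) hnocut hb ha hab.symm
        (z := q) (by rw [← erase_erase_comm]; exact hqE)
      rw [← erase_erase_comm, ← hE] at hpconn
      obtain ⟨wp, hwp⟩ := hpconn
      have hsupp : ∀ z ∈ wp.support, z ∈ K.erase a := by
        intro z hz
        have h1 : Conn G E q z := conn_of_mem_support wp hwp z hz
        have h2 : z ∈ E := hwp z hz
        refine Finset.mem_erase.2 ⟨((hmemE z).1 h2).2.1, hfilterK z h2 (hqconn.trans h1)⟩
      have hconnqp : Conn G (K.erase a) q p := ⟨wp, hsupp⟩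
      have hpKa : p ∈ K.erase a := hconnqp.mem_right
      exact hconnqp.trans (Conn.adj hpadj.symm hpKa hbKa)
    · simp only [Finset.mem_insert, Finset.mem_singleton] at hqab
      rcases hqab with rfl | rfl
      · exact absurd rfl hqa
      · exact Conn.refl hbKa
  -- (ii) every admissible walk from one to b passes through the other
  have hits : ∀ z z', ((z = x1 ∧ z' = x2) ∨ (z = x2 ∧ z' = x1)) →
      ∀ w : G.Walk z b, (∀ pt ∈ w.support, pt ∈ K.erase a) → z' ∈ w.support := by
    intro z z' hzz w hsupp
    by_contra hno
    have hzadj : G.Adj a z := by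
      rcases hzz with ⟨rfl, rfl⟩ | ⟨rfl, rfl⟩
      · exact ha1
      · exact ha2
    have hz'E : z' ∈ E := by
      rcases hzz with ⟨rfl, rfl⟩ | ⟨rfl, rfl⟩
      · exact hx2
      · exact hx1
    have hconn' : Conn G (K.erase z') a b := by
      refine ⟨Walk.cons hzadj w, ?_⟩
      intro pt hpt
      rcases List.mem_cons.1 (by simpa using hpt) with rfl | hpt'
      · refine Finset.mem_erase.2 ⟨?_, haK⟩
        intro h
        exact ((hmemE z').1 hz'E).2.1 h.symm
      · have := hsupp pt hpt'
        obtain ⟨h1, h2⟩ := Finset.mem_erase.1 this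
        refine Finset.mem_erase.2 ⟨fun h => hno (h ▸ hpt'), h2⟩
    rcases hzz with ⟨rfl, rfl⟩ | ⟨rfl, rfl⟩
    · exact hb2 hconn'
    · exact hb1 hconn'
  -- (iii) no walk at all: minimal-length descent
  have main : ∀ n z z', ((z = x1 ∧ z' = x2) ∨ (z = x2 ∧ z' = x1)) →
      ∀ w : G.Walk z b, (∀ pt ∈ w.support, pt ∈ K.erase a) → w.length = n → False := by
    intro n
    induction n using Nat.strong_induction_on with
    | _ n IH =>
      intro z z' hzz w hsupp hlen
      have hz' : z' ∈ w.support := hits z z' hzz w hsupp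
      have hnez : z ≠ z' := by
        rcases hzz with ⟨rfl, rfl⟩ | ⟨rfl, rfl⟩
        · exact hne
        · exact hne.symm
      have hsplit : (w.takeUntil z' hz').length + (w.dropUntil z' hz').length = w.length := by
        conv_rhs => rw [← Walk.take_spec w hz']
        rw [Walk.length_append]
      have htpos : 0 < (w.takeUntil z' hz').length := by
        rcases Nat.eq_zero_or_pos (w.takeUntil z' hz').length with h0 | h
        · exact absurd (walk_eq_of_length_zero _ h0) hnez
        · exact h
      refine IH (w.dropUntil z' hz').length (by omega) z' z ?_ (w.dropUntil z' hz')
        (fun pt hpt => hsupp pt (Walk.support_dropUntil_subset w hz' hpt)) rfl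
      rcases hzz with ⟨rfl, rfl⟩ | ⟨rfl, rfl⟩
      · exact Or.inr ⟨rfl, rfl⟩
      · exact Or.inl ⟨rfl, rfl⟩
  -- (iv) but K.erase a is connected, contradiction
  have hx1Ka : x1 ∈ K.erase a := by
    refine Finset.mem_erase.2 ⟨((hmemE x1).1 hx1).2.1, hfilterK x1 hx1 (Conn.refl hx1)⟩
  obtain ⟨w, hw⟩ := hKa x1 hx1Ka
  exact main w.length x1 x2 (Or.inl ⟨rfl, rfl⟩) w hw rfl

end Selection2

section Selection3

lemma Kset_eq {s : Finset V} {a b z z' : V}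
    (h : Conn G ((s.erase a).erase b) z z') : Kset G s a b z = Kset G s a b z' := by
  unfold Kset
  congr 1
  apply Finset.filter_congr
  intro w _
  constructor
  · intro hw; exact (h.symm.trans hw)
  · intro hw; exact (h.trans hw)

lemma selection {s : Finset V} {D : ℕ} {a b u0 w0 : V} (hD : 3 ≤ D)
    (hnocut : ∀ z ∈ s, ∀ p ∈ s.erase z, ∀ q ∈ s.erase z, Conn G (s.erase z) p q)
    (hdeg : (s.filter (fun z => G.Adj a z)).card = D)
    (ha : a ∈ s) (hb : b ∈ s) (hab : a ≠ b) (hnadj : ¬ G.Adj a b)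
    (hu0 : u0 ∈ (s.erase a).erase b) (hw0 : w0 ∈ (s.erase a).erase b)
    (hsep : ¬ Conn G ((s.erase a).erase b) u0 w0) :
    ∃ x y, G.Adj a x ∧ G.Adj a y ∧ x ≠ y ∧ ¬ G.Adj y x ∧ x ∈ s ∧ y ∈ s ∧
      a ∈ (s.erase x).erase y ∧
      ∀ q ∈ (s.erase x).erase y, Conn G ((s.erase x).erase y) q a := by
  classical
  set E := (s.erase a).erase b with hE
  have hmemE : ∀ z, z ∈ E ↔ (z ≠ b ∧ z ≠ a ∧ z ∈ s) := by
    intro z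
    rw [hE, Finset.mem_erase, Finset.mem_erase]
  have haE : a ∉ E := fun h => ((hmemE a).1 h).2.1 rfl
  have hbE : b ∉ E := fun h => ((hmemE b).1 h).1 rfl
  -- the assembling helper
  have assemble : ∀ x y, x ∈ E → y ∈ E → G.Adj a x → G.Adj a y → ¬ Conn G E x y →
      Conn G ((s.erase x).erase y) a b →
      (a ∈ (s.erase x).erase y ∧
        ∀ q ∈ (s.erase x).erase y, Conn G ((s.erase x).erase y) q a) := by
    intro x y hxE hyE hax hay hnxy hconnab
    have hxy : x ≠ y := by
      intro h; exact hnxy (h ▸ Conn.refl hxE)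
    have haxy : a ∈ (s.erase x).erase y := by
      rw [Finset.mem_erase, Finset.mem_erase]
      exact ⟨fun h => ((hmemE y).1 hyE).2.1 h.symm, fun h => ((hmemE x).1 hxE).2.1 h.symm, ha⟩
    refine ⟨haxy, ?_⟩
    intro q hq
    obtain ⟨hqy, hqx, hqs⟩ : q ≠ y ∧ q ≠ x ∧ q ∈ s := by
      rw [Finset.mem_erase, Finset.mem_erase] at hq
      exact ⟨hq.1, hq.2⟩
    by_cases hqa : q = a
    · subst hqa; exact Conn.refl haxy
    by_cases hqb : q = b
    · subst hqb; exact hconnab.symm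
    have hqE : q ∈ E := (hmemE q).2 ⟨hqb, hqa, hqs⟩
    by_cases hqcy : Conn G E q y
    · -- then ¬ Conn E q x; use reach with roles of x and y swapped
      have hqcx : ¬ Conn G E q x := fun h => hnxy (h.symm.trans hqcy)
      have := reach_a_or_b (s := s) hnocut ha hb hab hnadj (x := y) (y := x) (q := q)
        hyE hxE hqE hqy hqx hqcx
      rw [erase_erase_comm s y x] at this
      rcases this with h | h
      · exact h
      · exact h.trans hconnab.symm
    · have := reach_a_or_b (s := s) hnocut ha hb hab hnadj (x := x) (y := y) (q := q)
        hxE hyE hqE hqx hqy hqcy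
      rcases this with h | h
      · exact h
      · exact h.trans hconnab.symm
  -- neighbours of a in the two components
  obtain ⟨p1, hap1, hcp1⟩ := nbr_in_component (s := s) hnocut ha hb hab hu0
  obtain ⟨p2, hap2, hcp2⟩ := nbr_in_component (s := s) hnocut ha hb hab hw0
  rw [← hE] at hcp1 hcp2
  have hp1E : p1 ∈ E := hcp1.mem_right
  have hp2E : p2 ∈ E := hcp2.mem_right
  have hn12 : ¬ Conn G E p1 p2 := fun h => hsep ((hcp1.trans h).trans hcp2.symm)
  have hp12 : p1 ≠ p2 := fun h => hn12 (h ▸ Conn.refl hp1E)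
  have hnadj21 : ¬ G.Adj p2 p1 := fun h => hn12 (Conn.adj h.symm hp1E hp2E)
  by_cases hthird : ∃ z ∈ E, ¬ Conn G E u0 z ∧ ¬ Conn G E w0 z
  · -- case A: a third component provides an a–b connection avoiding p1, p2
    obtain ⟨z, hzE, hz1, hz2⟩ := hthird
    obtain ⟨pa, hapa, hcpa⟩ := nbr_in_component (s := s) hnocut ha hb hab hzE
    obtain ⟨pb, hbpb, hcpb⟩ := nbr_in_component (a := b) (b := a) hnocut hb ha hab.symm
      (by rw [← erase_erase_comm, ← hE]; exact hzE)
    rw [← hE] at hcpa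
    rw [← erase_erase_comm, ← hE] at hcpb
    have hzcomp : ∀ pt, Conn G E z pt → pt ∈ (s.erase p1).erase p2 := by
      intro pt hpt
      have hptE := hpt.mem_right
      rw [Finset.mem_erase, Finset.mem_erase]
      refine ⟨?_, ?_, ((hmemE pt).1 hptE).2.2⟩
      · intro h
        exact hz2 (hcp2.trans (h ▸ hpt).symm)
      · intro h
        exact hz1 (hcp1.trans (h ▸ hpt).symm)
    have hconnab : Conn G ((s.erase p1).erase p2) a b := by
      have hpa := hzcomp pa hcpa
      have hpb := hzcomp pb hcpb
      have haS : a ∈ (s.erase p1).erase p2 := by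
        rw [Finset.mem_erase, Finset.mem_erase]
        exact ⟨fun h => ((hmemE p2).1 hp2E).2.1 h.symm,
          fun h => ((hmemE p1).1 hp1E).2.1 h.symm, ha⟩
      have hbS : b ∈ (s.erase p1).erase p2 := by
        rw [Finset.mem_erase, Finset.mem_erase]
        exact ⟨fun h => ((hmemE p2).1 hp2E).1 h.symm,
          fun h => ((hmemE p1).1 hp1E).1 h.symm, hb⟩
      have h1 : Conn G ((s.erase p1).erase p2) a pa := Conn.adj hapa haS hpa
      have h3 : Conn G ((s.erase p1).erase p2) pb b := Conn.adj hbpb.symm hpb hbS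
      have h2 : Conn G ((s.erase p1).erase p2) pa pb := by
        obtain ⟨w, hw⟩ := hcpa.symm.trans hcpb
        refine ⟨w, ?_⟩
        intro pt hptmem
        exact hzcomp pt (hcpa.trans (conn_of_mem_support w hw pt hptmem))
      exact (h1.trans h2).trans h3
    obtain ⟨h1, h2⟩ := assemble p1 p2 hp1E hp2E hap1 hap2 hn12 hconnab
    exact ⟨p1, p2, hap1, hap2, hp12, hnadj21, ((hmemE p1).1 hp1E).2.2,
      ((hmemE p2).1 hp2E).2.2, h1, h2⟩
  · -- case B: exactly the two components
    push_neg at hthird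
    by_cases hB1 : ∃ z ∈ E, G.Adj a z ∧ Conn G E u0 z ∧
        Conn G ((Kset G s a b z).erase z) a b
    · obtain ⟨z, hzE, haz, hcz, hcab⟩ := hB1
      have hnzp2 : ¬ Conn G E z p2 := fun h =>
        hsep ((hcz.trans h).trans hcp2.symm)
      have hzp2 : z ≠ p2 := fun h => hnzp2 (h ▸ Conn.refl hzE)
      have hconnab : Conn G ((s.erase z).erase p2) a b := by
        obtain ⟨w, hw⟩ := hcab
        refine ⟨w, ?_⟩
        intro pt hpt
        have := hw pt hpt
        obtain ⟨hptz, hptK⟩ := Finset.mem_erase.1 this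
        rw [Finset.mem_erase, Finset.mem_erase]
        rcases Finset.mem_union.1 hptK with hf | hab'
        · obtain ⟨hptE, hptc⟩ := Finset.mem_filter.1 hf
          refine ⟨?_, hptz, ((hmemE pt).1 hptE).2.2⟩
          intro h
          exact hnzp2 (h ▸ hptc)
        · simp only [Finset.mem_insert, Finset.mem_singleton] at hab'
          rcases hab' with rfl | rfl
          · exact ⟨fun h => ((hmemE p2).1 hp2E).2.1 h.symm, hptz, ha⟩
          · exact ⟨fun h => ((hmemE p2).1 hp2E).1 h.symm, hptz, hb⟩
      obtain ⟨h1, h2⟩ := assemble z p2 hzE hp2E haz hap2 hnzp2 hconnab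
      refine ⟨z, p2, haz, hap2, hzp2, ?_, ((hmemE z).1 hzE).2.2,
        ((hmemE p2).1 hp2E).2.2, h1, h2⟩
      intro h
      exact hnzp2 (Conn.adj h.symm hzE hp2E)
    · by_cases hB2 : ∃ z ∈ E, G.Adj a z ∧ Conn G E w0 z ∧
          Conn G ((Kset G s a b z).erase z) a b
      · obtain ⟨z, hzE, haz, hcz, hcab⟩ := hB2
        have hnzp1 : ¬ Conn G E z p1 := fun h =>
          hsep (((hcz.trans h).trans hcp1.symm)).symm
        have hzp1 : z ≠ p1 := fun h => hnzp1 (h ▸ Conn.refl hzE)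
        have hconnab : Conn G ((s.erase z).erase p1) a b := by
          obtain ⟨w, hw⟩ := hcab
          refine ⟨w, ?_⟩
          intro pt hpt
          have := hw pt hpt
          obtain ⟨hptz, hptK⟩ := Finset.mem_erase.1 this
          rw [Finset.mem_erase, Finset.mem_erase]
          rcases Finset.mem_union.1 hptK with hf | hab'
          · obtain ⟨hptE, hptc⟩ := Finset.mem_filter.1 hf
            refine ⟨?_, hptz, ((hmemE pt).1 hptE).2.2⟩
            intro h
            exact hnzp1 (h ▸ hptc)
          · simp only [Finset.mem_insert, Finset.mem_singleton] at hab'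
            rcases hab' with rfl | rfl
            · exact ⟨fun h => ((hmemE p1).1 hp1E).2.1 h.symm, hptz, ha⟩
            · exact ⟨fun h => ((hmemE p1).1 hp1E).1 h.symm, hptz, hb⟩
        obtain ⟨h1, h2⟩ := assemble z p1 hzE hp1E haz hap1 hnzp1 hconnab
        refine ⟨z, p1, haz, hap1, hzp1, ?_, ((hmemE z).1 hzE).2.2,
          ((hmemE p1).1 hp1E).2.2, h1, h2⟩
        intro h
        exact hnzp1 (Conn.adj h.symm hzE hp1E)
      · -- case B3 : impossible, degree of a would be ≤ 2
        exfalso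
        push_neg at hB1 hB2
        set F := s.filter (fun z => G.Adj a z) with hF
        have hFE : ∀ z ∈ F, z ∈ E := by
          intro z hz
          obtain ⟨hzs, hza⟩ := Finset.mem_filter.1 hz
          refine (hmemE z).2 ⟨?_, ?_, hzs⟩
          · rintro rfl; exact hnadj hza
          · rintro rfl; exact G.irrefl hza
        have hsplit : F = F.filter (fun z => Conn G E u0 z) ∪
            F.filter (fun z => ¬ Conn G E u0 z) :=
          (Finset.filter_union_filter_not_eq _ F).symm
        have hcard1 : (F.filter (fun z => Conn G E u0 z)).card ≤ 1 := by
          by_contra hgt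
          push_neg at hgt
          obtain ⟨x1, hx1, x2, hx2, hne⟩ := Finset.one_lt_card.1 hgt
          obtain ⟨hx1F, hx1c⟩ := Finset.mem_filter.1 hx1
          obtain ⟨hx2F, hx2c⟩ := Finset.mem_filter.1 hx2
          have h12 : Conn G E x1 x2 := hx1c.symm.trans hx2c
          have hKeq : Kset G s a b x1 = Kset G s a b x2 := Kset_eq h12
          refine two_separators (s := s) hnocut ha hb hab (hFE x1 hx1F) (hFE x2 hx2F)
            h12 hne (Finset.mem_filter.1 hx1F).2 (Finset.mem_filter.1 hx2F).2 ?_ ?_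
          · exact hB1 x1 (hFE x1 hx1F) (Finset.mem_filter.1 hx1F).2 hx1c
          · rw [hKeq]
            exact hB1 x2 (hFE x2 hx2F) (Finset.mem_filter.1 hx2F).2 hx2c
        have hcard2 : (F.filter (fun z => ¬ Conn G E u0 z)).card ≤ 1 := by
          by_contra hgt
          push_neg at hgt
          obtain ⟨x1, hx1, x2, hx2, hne⟩ := Finset.one_lt_card.1 hgt
          obtain ⟨hx1F, hx1c⟩ := Finset.mem_filter.1 hx1
          obtain ⟨hx2F, hx2c⟩ := Finset.mem_filter.1 hx2
          have hw1 : Conn G E w0 x1 := by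
            have := hthird x1 (hFE x1 hx1F)
            tauto
          have hw2 : Conn G E w0 x2 := by
            have := hthird x2 (hFE x2 hx2F)
            tauto
          have h12 : Conn G E x1 x2 := hw1.symm.trans hw2
          have hKeq : Kset G s a b x1 = Kset G s a b x2 := Kset_eq h12
          refine two_separators (s := s) hnocut ha hb hab (hFE x1 hx1F) (hFE x2 hx2F)
            h12 hne (Finset.mem_filter.1 hx1F).2 (Finset.mem_filter.1 hx2F).2 ?_ ?_
          · exact hB2 x1 (hFE x1 hx1F) (Finset.mem_filter.1 hx1F).2 hw1
          · rw [hKeq]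
            exact hB2 x2 (hFE x2 hx2F) (Finset.mem_filter.1 hx2F).2 hw2
        have : F.card ≤ 2 := by
          calc F.card = (F.filter (fun z => Conn G E u0 z) ∪
              F.filter (fun z => ¬ Conn G E u0 z)).card := by rw [← hsplit]
          _ ≤ _ := Finset.card_union_le _ _
          _ ≤ 2 := by omega
        omega

end Selection3

/-! ### Brooks' theorem for D ≥ 3, finset version -/

theorem brooks {D : ℕ} (hD : 3 ≤ D)
    (hcl : ∀ t : Finset V, t.card = D + 1 → ¬ G.IsClique (↑t : Set V)) :
    ∀ n (s : Finset V), s.card ≤ n →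
      (∀ u ∈ s, (s.filter (fun z => G.Adj u z)).card ≤ D) →
      ∃ c, Good G s D c := by
  intro n
  induction n using Nat.strong_induction_on with
  | _ n IH =>
    intro s hcard hdeg
    rcases Finset.eq_empty_or_nonempty s with rfl | ⟨u₀, hu₀⟩
    · exact ⟨fun _ => 0, fun u hu => absurd hu (by simp), fun u hu => absurd hu (by simp)⟩
    have hsub_deg : ∀ t : Finset V, t ⊆ s → ∀ u ∈ t, (t.filter (fun z => G.Adj u z)).card ≤ D :=
      fun t hts u hut => le_trans (Finset.card_le_card
        (Finset.filter_subset_filter _ hts)) (hdeg u (hts hut))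
    set t0 := s.filter (fun z => Conn G s u₀ z) with ht0
    by_cases htS : t0 = s
    case neg =>
      -- s is disconnected: split off the component of u₀
      have ht0sub : t0 ⊆ s := Finset.filter_subset _ _
      have hu₀t0 : u₀ ∈ t0 := Finset.mem_filter.2 ⟨hu₀, Conn.refl hu₀⟩
      have hcard1 : t0.card < n :=
        lt_of_lt_of_le (Finset.card_lt_card (ssubset_of_ne_of_subset htS ht0sub)) hcard
      have hst0ne : (s \ t0).Nonempty := by
        rcases Finset.exists_of_ssubset (ssubset_of_ne_of_subset htS ht0sub) with ⟨z, hz1, hz2⟩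
        exact ⟨z, Finset.mem_sdiff.2 ⟨hz1, hz2⟩⟩
      have hcard2 : (s \ t0).card < n := by
        have h1 : (s \ t0).card ≤ s.card - t0.card := by
          rw [Finset.card_sdiff_of_subset ht0sub]
        have h2 : 0 < t0.card := Finset.card_pos.2 ⟨u₀, hu₀t0⟩
        omega
      obtain ⟨c1, hc1⟩ := IH t0.card hcard1 t0 le_rfl (hsub_deg t0 ht0sub)
      obtain ⟨c2, hc2⟩ := IH (s \ t0).card hcard2 (s \ t0) le_rfl
        (hsub_deg _ (Finset.sdiff_subset))
      refine ⟨fun z => if z ∈ t0 then c1 z else c2 z, ?_, ?_⟩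
      · intro u hu
        by_cases hut : u ∈ t0
        · simpa [hut] using hc1.1 u hut
        · simpa [hut] using hc2.1 u (Finset.mem_sdiff.2 ⟨hu, hut⟩)
      · intro u hu w hw hadj
        have hcross : ∀ p, p ∈ t0 → ∀ q ∈ s, G.Adj p q → q ∈ t0 := by
          intro p hp q hq hpq
          exact Finset.mem_filter.2 ⟨hq,
            (Finset.mem_filter.1 hp).2.trans (Conn.adj hpq ((Finset.mem_filter.1 hp).1) hq)⟩
        by_cases hut : u ∈ t0 <;> by_cases hwt : w ∈ t0 <;>
          simp only [hut, hwt, if_true, if_false, ite_true, ite_false]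
        · exact hc1.2 u hut w hwt hadj
        · exact absurd (hcross u hut w hw hadj) hwt
        · exact absurd (hcross w hwt u hu hadj.symm) hut
        · exact hc2.2 u (Finset.mem_sdiff.2 ⟨hu, hut⟩) w (Finset.mem_sdiff.2 ⟨hw, hwt⟩) hadj
    case pos =>
    -- s is connected
    have hconn : ∀ p ∈ s, ∀ q ∈ s, Conn G s p q := by
      intro p hp q hq
      have h1 : p ∈ t0 := htS ▸ hp
      have h2 : q ∈ t0 := htS ▸ hq
      exact ((Finset.mem_filter.1 h1).2).symm.trans (Finset.mem_filter.1 h2).2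
    by_cases hnonreg : ∃ v ∈ s, (s.filter (fun z => G.Adj v z)).card < D
    · obtain ⟨v, hv, hvdeg⟩ := hnonreg
      exact exists_good_of_nonregular hv (fun u hu => hconn u hu v hv) hdeg hvdeg
    push_neg at hnonreg
    have hreg : ∀ u ∈ s, (s.filter (fun z => G.Adj u z)).card = D :=
      fun u hu => le_antisymm (hdeg u hu) (hnonreg u hu)
    -- s.card ≥ D + 2
    have hDcard : D + 1 ≤ s.card := by
      have h1 : s.filter (fun z => G.Adj u₀ z) ⊆ s.erase u₀ := by
        intro z hz
        obtain ⟨hzs, hza⟩ := Finset.mem_filter.1 hz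
        exact Finset.mem_erase.2 ⟨fun h => G.irrefl (h ▸ hza), hzs⟩
      have := Finset.card_le_card h1
      rw [hreg u₀ hu₀, Finset.card_erase_of_mem hu₀] at this
      omega
    have hcard2 : D + 2 ≤ s.card := by
      rcases Nat.lt_or_ge (D + 1) s.card with h | h
      · omega
      · exfalso
        have hsc : s.card = D + 1 := le_antisymm h hDcard
        apply hcl s hsc
        intro x hx y hy hxy
        simp only [Finset.coe_mem, Finset.mem_coe] at hx hy
        have h1 : s.filter (fun z => G.Adj x z) ⊆ s.erase x := by
          intro z hz
          obtain ⟨hzs, hza⟩ := Finset.mem_filter.1 hz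
          exact Finset.mem_erase.2 ⟨fun hh => G.irrefl (hh ▸ hza), hzs⟩
        have hcards : (s.erase x).card = D := by
          rw [Finset.card_erase_of_mem hx, hsc]
          omega
        have : s.filter (fun z => G.Adj x z) = s.erase x :=
          Finset.eq_of_subset_of_card_le h1 (by rw [hcards, hreg x hx])
        have hy' : y ∈ s.filter (fun z => G.Adj x z) := by
          rw [this]
          exact Finset.mem_erase.2 ⟨hxy.symm, hy⟩
        exact (Finset.mem_filter.1 hy').2
    -- cut vertex?
    by_cases hcut : ∃ aa ∈ s, ∃ u ∈ s.erase aa, ∃ w ∈ s.erase aa, ¬ Conn G (s.erase aa) u w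
    · obtain ⟨aa, haa, u, hu, w, hw, hsep⟩ := hcut
      set E := s.erase aa with hEdef
      set t := E.filter (fun z => Conn G E u z) ∪ {aa} with htdef
      set t' := (s \ t) ∪ {aa} with ht'def
      have htsub : t ⊆ s := by
        intro z hz
        rcases Finset.mem_union.1 hz with h | h
        · exact Finset.mem_of_mem_erase (Finset.mem_filter.1 h).1
        · simp only [Finset.mem_singleton] at h
          exact h ▸ haa
      have ht'sub : t' ⊆ s := by
        intro z hz
        rcases Finset.mem_union.1 hz with h | h
        · exact (Finset.mem_sdiff.1 h).1
        · simp only [Finset.mem_singleton] at h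
          exact h ▸ haa
      have haat : aa ∈ t := Finset.mem_union_right _ (by simp)
      have haat' : aa ∈ t' := Finset.mem_union_right _ (by simp)
      have hut : u ∈ t := Finset.mem_union_left _ (Finset.mem_filter.2 ⟨hu, Conn.refl hu⟩)
      have hwt : w ∉ t := by
        intro h
        rcases Finset.mem_union.1 h with h | h
        · exact hsep (Finset.mem_filter.1 h).2
        · simp only [Finset.mem_singleton] at h
          exact (Finset.mem_erase.1 hw).1 h
      have hwt' : w ∈ t' := Finset.mem_union_left _
        (Finset.mem_sdiff.2 ⟨Finset.mem_of_mem_erase hw, hwt⟩)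
      have hut' : u ∉ t' := by
        intro h
        rcases Finset.mem_union.1 h with h | h
        · exact (Finset.mem_sdiff.1 h).2 hut
        · simp only [Finset.mem_singleton] at h
          exact (Finset.mem_erase.1 hu).1 h
      have hcardt : t.card < n := by
        have : t ⊂ s := Finset.ssubset_iff_of_subset htsub |>.2 ⟨w, Finset.mem_of_mem_erase hw, hwt⟩
        exact lt_of_lt_of_le (Finset.card_lt_card this) hcard
      have hcardt' : t'.card < n := by
        have : t' ⊂ s := Finset.ssubset_iff_of_subset ht'sub |>.2
          ⟨u, Finset.mem_of_mem_erase hu, hut'⟩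
        exact lt_of_lt_of_le (Finset.card_lt_card this) hcard
      refine glue_one (G := G) (a := aa) ?_ ?_ ?_ (by omega)
        (IH t.card hcardt t le_rfl (hsub_deg t htsub))
        (IH t'.card hcardt' t' le_rfl (hsub_deg t' ht'sub))
      · -- union
        apply Finset.Subset.antisymm
        · intro z hz
          rcases Finset.mem_union.1 hz with h | h
          · exact htsub h
          · exact ht'sub h
        · intro z hz
          by_cases hzt : z ∈ t
          · exact Finset.mem_union_left _ hzt
          · exact Finset.mem_union_right _ (Finset.mem_union_left _ (Finset.mem_sdiff.2 ⟨hz, hzt⟩))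
      · -- intersection
        apply Finset.Subset.antisymm
        · intro z hz
          obtain ⟨hz1, hz2⟩ := Finset.mem_inter.1 hz
          rcases Finset.mem_union.1 hz2 with h | h
          · exact absurd hz1 (Finset.mem_sdiff.1 h).2
          · simpa using h
        · intro z hz
          simp only [Finset.mem_singleton] at hz
          exact hz ▸ Finset.mem_inter.2 ⟨haat, haat'⟩
      · -- cross edges
        intro p hp q hq hpq
        by_contra hcon
        push_neg at hcon
        obtain ⟨hpa, hqa⟩ := hcon
        have hpE : p ∈ E.filter (fun z => Conn G E u z) := by
          rcases Finset.mem_union.1 hp with h | h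
          · exact h
          · simp only [Finset.mem_singleton] at h
            exact absurd h hpa
        have hqE : q ∈ s \ t := by
          rcases Finset.mem_union.1 hq with h | h
          · exact h
          · simp only [Finset.mem_singleton] at h
            exact absurd h hqa
        obtain ⟨hpE1, hpE2⟩ := Finset.mem_filter.1 hpE
        have hqE' : q ∈ E := Finset.mem_erase.2 ⟨hqa, (Finset.mem_sdiff.1 hqE).1⟩
        have : q ∈ t := Finset.mem_union_left _
          (Finset.mem_filter.2 ⟨hqE', hpE2.trans (Conn.adj hpq hpE1 hqE')⟩)
        exact (Finset.mem_sdiff.1 hqE).2 this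
    -- no cut vertex
    push_neg at hcut
    by_cases h2cut : ∃ aa ∈ s, ∃ bb ∈ s.erase aa, ∃ u ∈ (s.erase aa).erase bb,
        ∃ w ∈ (s.erase aa).erase bb, ¬ Conn G ((s.erase aa).erase bb) u w
    · obtain ⟨aa, haa, bb, hbb, u, hu, w, hw, hsep⟩ := h2cut
      have habne : aa ≠ bb := fun h => (Finset.mem_erase.1 hbb).1 h.symm
      have hbbs : bb ∈ s := Finset.mem_of_mem_erase hbb
      by_cases hadjab : G.Adj aa bb
      · -- adjacent 2-cut: glue along {aa, bb}
        set E := (s.erase aa).erase bb with hEdef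
        set t := E.filter (fun z => Conn G E u z) ∪ {aa, bb} with htdef
        set t' := (s \ t) ∪ {aa, bb} with ht'def
        have hmemE : ∀ z, z ∈ E ↔ (z ≠ bb ∧ z ≠ aa ∧ z ∈ s) := by
          intro z
          rw [hEdef, Finset.mem_erase, Finset.mem_erase]
        have htsub : t ⊆ s := by
          intro z hz
          rcases Finset.mem_union.1 hz with h | h
          · exact ((hmemE z).1 (Finset.mem_filter.1 h).1).2.2
          · simp only [Finset.mem_insert, Finset.mem_singleton] at h
            rcases h with rfl | rfl
            · exact haa
            · exact hbbs
        have ht'sub : t' ⊆ s := by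
          intro z hz
          rcases Finset.mem_union.1 hz with h | h
          · exact (Finset.mem_sdiff.1 h).1
          · simp only [Finset.mem_insert, Finset.mem_singleton] at h
            rcases h with rfl | rfl
            · exact haa
            · exact hbbs
        have haat : aa ∈ t := Finset.mem_union_right _ (by simp)
        have hbbt : bb ∈ t := Finset.mem_union_right _ (by simp)
        have haat' : aa ∈ t' := Finset.mem_union_right _ (by simp)
        have hbbt' : bb ∈ t' := Finset.mem_union_right _ (by simp)
        have hut : u ∈ t := Finset.mem_union_left _ (Finset.mem_filter.2 ⟨hu, Conn.refl hu⟩)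
        have hwt : w ∉ t := by
          intro h
          rcases Finset.mem_union.1 h with h | h
          · exact hsep (Finset.mem_filter.1 h).2
          · simp only [Finset.mem_insert, Finset.mem_singleton] at h
            rcases h with rfl | rfl
            · exact ((hmemE w).1 hw).2.1 rfl
            · exact ((hmemE w).1 hw).1 rfl
        have hwt' : w ∈ t' := Finset.mem_union_left _
          (Finset.mem_sdiff.2 ⟨((hmemE w).1 hw).2.2, hwt⟩)
        have hut' : u ∉ t' := by
          intro h
          rcases Finset.mem_union.1 h with h | h
          · exact (Finset.mem_sdiff.1 h).2 hut
          · simp only [Finset.mem_insert, Finset.mem_singleton] at h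
            rcases h with rfl | rfl
            · exact ((hmemE u).1 hu).2.1 rfl
            · exact ((hmemE u).1 hu).1 rfl
        have hcardt : t.card < n := by
          have : t ⊂ s := Finset.ssubset_iff_of_subset htsub |>.2
            ⟨w, ((hmemE w).1 hw).2.2, hwt⟩
          exact lt_of_lt_of_le (Finset.card_lt_card this) hcard
        have hcardt' : t'.card < n := by
          have : t' ⊂ s := Finset.ssubset_iff_of_subset ht'sub |>.2
            ⟨u, ((hmemE u).1 hu).2.2, hut'⟩
          exact lt_of_lt_of_le (Finset.card_lt_card this) hcard
        refine glue_two (G := G) (a := aa) (b := bb) ?_ ?_ hadjab ?_ (by omega)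
          (IH t.card hcardt t le_rfl (hsub_deg t htsub))
          (IH t'.card hcardt' t' le_rfl (hsub_deg t' ht'sub))
        · apply Finset.Subset.antisymm
          · intro z hz
            rcases Finset.mem_union.1 hz with h | h
            · exact htsub h
            · exact ht'sub h
          · intro z hz
            by_cases hzt : z ∈ t
            · exact Finset.mem_union_left _ hzt
            · exact Finset.mem_union_right _
                (Finset.mem_union_left _ (Finset.mem_sdiff.2 ⟨hz, hzt⟩))
        · apply Finset.Subset.antisymm
          · intro z hz
            obtain ⟨hz1, hz2⟩ := Finset.mem_inter.1 hz
            rcases Finset.mem_union.1 hz2 with h | h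
            · exact absurd hz1 (Finset.mem_sdiff.1 h).2
            · exact h
          · intro z hz
            simp only [Finset.mem_insert, Finset.mem_singleton] at hz
            rcases hz with rfl | rfl
            · exact Finset.mem_inter.2 ⟨haat, haat'⟩
            · exact Finset.mem_inter.2 ⟨hbbt, hbbt'⟩
        · intro p hp q hq hpq
          by_contra hcon
          push_neg at hcon
          obtain ⟨hpa, hpb, hqa, hqb⟩ := hcon
          have hpE : p ∈ E.filter (fun z => Conn G E u z) := by
            rcases Finset.mem_union.1 hp with h | h
            · exact h
            · simp only [Finset.mem_insert, Finset.mem_singleton] at h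
              rcases h with rfl | rfl
              · exact absurd rfl hpa
              · exact absurd rfl hpb
          have hqE : q ∈ s \ t := by
            rcases Finset.mem_union.1 hq with h | h
            · exact h
            · simp only [Finset.mem_insert, Finset.mem_singleton] at h
              rcases h with rfl | rfl
              · exact absurd rfl hqa
              · exact absurd rfl hqb
          obtain ⟨hpE1, hpE2⟩ := Finset.mem_filter.1 hpE
          have hqE' : q ∈ E := (hmemE q).2 ⟨hqb, hqa, (Finset.mem_sdiff.1 hqE).1⟩
          have : q ∈ t := Finset.mem_union_left _
            (Finset.mem_filter.2 ⟨hqE', hpE2.trans (Conn.adj hpq hpE1 hqE')⟩)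
          exact (Finset.mem_sdiff.1 hqE).2 this
      · -- non-adjacent 2-cut: the selection lemma
        obtain ⟨x, y, hax, hay, hxy, hnyx, hxs, hys, haxy, hconn''⟩ :=
          selection (s := s) (D := D) hD hcut (hreg aa haa) haa hbbs habne hadjab hu hw hsep
        exact exists_good_of_selection hxs hys hxy hnyx hax hay haxy
          (fun q hq => hconn'' q hq) hdeg (by omega)
    · -- "3-connected" case: any vertex with two non-adjacent neighbours works
      push_neg at h2cut
      set F := s.filter (fun z => G.Adj u₀ z) with hFdef
      have hu₀F : u₀ ∉ F := fun h => G.irrefl (Finset.mem_filter.1 h).2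
      have hcardF : (insert u₀ F).card = D + 1 := by
        rw [Finset.card_insert_of_notMem hu₀F, hreg u₀ hu₀]
      have := hcl _ hcardF
      rw [SimpleGraph.isClique_iff] at this
      have hex : ∃ x ∈ insert u₀ F, ∃ y ∈ insert u₀ F, x ≠ y ∧ ¬ G.Adj x y := by
        by_contra hcon
        push_neg at hcon
        exact this (fun x hx y hy hne => hcon x (by simpa using hx) y (by simpa using hy) hne)
      obtain ⟨x, hx, y, hy, hxyne, hxynadj⟩ := hex
      have hxF : x ∈ F := by
        rcases Finset.mem_insert.1 hx with rfl | h
        · exfalso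
          rcases Finset.mem_insert.1 hy with rfl | h
          · exact hxyne rfl
          · exact hxynadj (Finset.mem_filter.1 h).2
        · exact h
      have hyF : y ∈ F := by
        rcases Finset.mem_insert.1 hy with rfl | h
        · exact absurd ((Finset.mem_filter.1 hxF).2).symm hxynadj
        · exact h
      have hxs : x ∈ s := (Finset.mem_filter.1 hxF).1
      have hys : y ∈ s := (Finset.mem_filter.1 hyF).1
      have hadjx : G.Adj u₀ x := (Finset.mem_filter.1 hxF).2
      have hadjy : G.Adj u₀ y := (Finset.mem_filter.1 hyF).2
      have hu₀x : u₀ ≠ x := fun h => G.irrefl (h ▸ hadjx)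
      have hu₀y : u₀ ≠ y := fun h => G.irrefl (h ▸ hadjy)
      have hys' : y ∈ s.erase x := Finset.mem_erase.2 ⟨hxyne.symm, hys⟩
      have hu₀'' : u₀ ∈ (s.erase x).erase y :=
        Finset.mem_erase.2 ⟨hu₀y, Finset.mem_erase.2 ⟨hu₀x, hu₀⟩⟩
      exact exists_good_of_selection hxs hys hxyne (fun h => hxynadj h.symm) hadjx hadjy
        hu₀'' (fun q hq => h2cut x hxs y hys' q hq u₀ hu₀'') hdeg (by omega)

/-! ### the bipartite case (max degree 2, no odd cycles) -/

lemma length_rotate' {u v : V} (c : G.Walk v v) (h : u ∈ c.support) :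
    (c.rotate u h).length = c.length := by
  rw [Walk.rotate, Walk.length_append, Nat.add_comm]
  conv_rhs => rw [← Walk.take_spec c h]
  rw [Walk.length_append]

lemma path_loop_length_zero {v : V} (p : G.Walk v v) (hp : p.IsPath) : p.length = 0 := by
  cases p with
  | nil => rfl
  | cons h q =>
    exfalso
    have hnd := (Walk.isPath_def _).1 hp
    rw [Walk.support_cons] at hnd
    exact (List.nodup_cons.1 hnd).1 q.end_mem_support

lemma path_edge_end {x y z : V} (p : G.Walk x y) (hp : p.IsPath) (hz : s(z, y) ∈ p.edges) :
    ∃ q : G.Walk x z, ∃ h' : G.Adj z y, p = q.concat h' := by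
  induction p using SimpleGraph.Walk.concatRec with
  | Hnil => simp at hz
  | @Hconcat a w y q h' ih =>
    rw [Walk.edges_concat, List.concat_eq_append] at hz
    rcases List.mem_append.1 hz with hz' | hz'
    · exfalso
      have hy : y ∈ q.support := Walk.snd_mem_support_of_mem_edges q hz'
      have hnd := (Walk.isPath_def _).1 hp
      rw [Walk.support_concat, List.nodup_append] at hnd
      exact hnd.2.2 y hy y (by simp) rfl
    · simp only [List.mem_singleton] at hz'
      have := Sym2.eq_iff.1 hz'
      rcases this with ⟨rfl, -⟩ | ⟨rfl, rfl⟩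
      · exact ⟨q, h', rfl⟩
      · exact absurd h' (G.irrefl)

lemma no_odd_closed_walk (hno : ∀ (v : V) (c : G.Walk v v), c.IsCycle → ¬ Odd c.length) :
    ∀ (n : ℕ) (v : V) (w : G.Walk v v), w.length = n → ¬ Odd n := by
  intro n
  induction n using Nat.strong_induction_on with
  | _ n IH =>
    intro v w hlen hodd
    -- key step for a closed walk whose basepoint appears twice in the tail
    have key : ∀ (u : V) (w2 : G.Walk u u), w2.length = n →
        2 ≤ w2.support.tail.count u → False := by
      intro u w2 h2 hc2
      cases w2 with
      | nil =>
        simp at h2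
        subst h2
        simp [Nat.odd_iff] at hodd
      | @cons _ v₃ _ h2' p2 =>
        rw [Walk.support_cons] at hc2
        simp only [List.tail_cons] at hc2
        have hmem : u ∈ p2.support := List.count_pos_iff.1 (by omega)
        set t' := p2.takeUntil u hmem with ht'
        set d' := p2.dropUntil u hmem with hd'
        have hsplit : t'.length + d'.length = p2.length := by
          conv_rhs => rw [← Walk.take_spec p2 hmem]
          rw [Walk.length_append]
        have hdpos : 0 < d'.length := by
          rcases Nat.eq_zero_or_pos d'.length with h0 | h
          · exfalso
            have hdnil : d' = Walk.nil := Walk.Nil.eq_nil (Walk.length_eq_zero_iff.1 h0)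
            have hps : p2.support = t'.support := by
              conv_lhs => rw [← Walk.take_spec p2 hmem]
              rw [Walk.support_append, ← ht', ← hd', hdnil]
              simp
            rw [hps, Walk.count_support_takeUntil_eq_one p2 hmem] at hc2
            omega
          · exact h
        have hw1 : (Walk.cons h2' t').length = t'.length + 1 := by simp
        have hlen2 : p2.length + 1 = n := by simpa using h2
        rcases Nat.even_or_odd (t'.length + 1) with hev | hod
        · -- then d' has odd length
          have hodd' : Odd d'.length := by
            rw [Nat.odd_iff] at hodd ⊢
            rw [Nat.even_iff] at hev
            omega
          exact IH d'.length (by omega) u d' rfl hodd'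
        · exact IH (t'.length + 1) (by omega) u (Walk.cons h2' t') (by simp) hod
    cases w with
    | nil => simp at hlen; subst hlen; simp [Nat.odd_iff] at hodd
    | @cons _ v₂ _ h p =>
      by_cases hnd : p.support.Nodup
      · have hpath : p.IsPath := Walk.IsPath.mk' hnd
        by_cases hedge : s(v, v₂) ∈ p.edges
        · -- then p is a single edge and the walk has length 2
          have hz : s(v₂, v) ∈ p.edges := by rwa [Sym2.eq_swap] at hedge
          obtain ⟨q, h', hq⟩ := path_edge_end p hpath hz
          have hqpath : q.IsPath := by
            rw [Walk.isPath_def]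
            have := (Walk.isPath_def _).1 hpath
            rw [hq, Walk.support_concat, List.nodup_append] at this
            exact this.1
          have hq0 : q.length = 0 := path_loop_length_zero q hqpath
          have : p.length = 1 := by rw [hq, Walk.length_concat, hq0]
          rw [← hlen] at hodd
          simp [Walk.length_cons, this, Nat.odd_iff] at hodd
        · have hcyc : (Walk.cons h p).IsCycle := (Walk.cons_isCycle_iff p h).2 ⟨hpath, hedge⟩
          exact hno v _ hcyc (hlen ▸ hodd)
      · obtain ⟨u, hdup⟩ := List.exists_duplicate_iff_not_nodup.2 hnd
        have hcount : 2 ≤ p.support.count u := List.duplicate_iff_two_le_count.1 hdup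
        have husup : u ∈ (Walk.cons h p).support := by
          rw [Walk.support_cons]
          exact List.mem_cons_of_mem _ (List.count_pos_iff.1 (by omega))
        have hrotlen : ((Walk.cons h p).rotate u husup).length = n :=
          (length_rotate' _ husup).trans hlen
        have hrotcount : 2 ≤ ((Walk.cons h p).rotate u husup).support.tail.count u := by
          have hperm := (Walk.support_rotate (Walk.cons h p) u husup).perm
          rw [hperm.count_eq]
          rw [Walk.support_cons]
          simpa using hcount
        exact key u _ hrotlen hrotcount

lemma exists_good_two [Fintype V] (hV : ∀ (v : V) (w : G.Walk v v), ¬ Odd w.length) :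
    ∃ c, Good G (Finset.univ : Finset V) 2 c := by
  refine ⟨fun u => G.dist ((G.connectedComponentMk u).out) u % 2, fun u _ => Nat.mod_lt _ (by omega), ?_⟩
  intro u _ w _ hadj heq
  have hcc : G.connectedComponentMk u = G.connectedComponentMk w :=
    ConnectedComponent.sound hadj.reachable
  have hru : G.Reachable ((G.connectedComponentMk u).out) u :=
    ConnectedComponent.exact (G.connectedComponentMk u).out_eq
  have hrw : G.Reachable ((G.connectedComponentMk u).out) w := hru.trans hadj.reachable
  obtain ⟨p, hp⟩ := hru.exists_walk_length_eq_dist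
  obtain ⟨q, hq⟩ := hrw.exists_walk_length_eq_dist
  have heq' : G.dist ((G.connectedComponentMk u).out) u % 2 =
      G.dist ((G.connectedComponentMk w).out) w % 2 := heq
  have hout : (G.connectedComponentMk w).out = (G.connectedComponentMk u).out := by rw [hcc]
  rw [hout] at heq'
  clear heq
  have hqd : q.length = G.dist ((G.connectedComponentMk u).out) w := hq
  have hclosed := hV _ (p.append (Walk.cons hadj q.reverse))
  rw [Nat.odd_iff, Walk.length_append, Walk.length_cons, Walk.length_reverse] at hclosed
  omega

end Statement17

theorem statement_17 {V : Type} [Fintype V] (G : SimpleGraph V)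
    (hΔ : 1 ≤ G.maxDegree)
    (hclique : ¬ ∃ s : Finset V, s.card = G.maxDegree + 1 ∧ G.IsClique ↑s)
    (hodd : G.maxDegree = 2 →
      ¬ ∃ (v : V) (c : G.Walk v v), c.IsCycle ∧ Odd c.length) :
    ∃ s : Finset V, (∀ a ∈ s, ∀ b ∈ s, ¬ G.Adj a b) ∧
      (Fintype.card V + G.maxDegree - 1) / G.maxDegree ≤ s.card := by
  rcases Nat.lt_or_ge G.maxDegree 2 with hD1 | hD2
  · -- maxDegree = 1 : impossible, an edge would give a clique of size 2
    exfalso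
    have hD : G.maxDegree = 1 := by omega
    have hne : Nonempty V := by
      by_contra hemp
      haveI : IsEmpty V := not_nonempty_iff.1 hemp
      have h0 : G.maxDegree = 0 := by
        simp [SimpleGraph.maxDegree, Finset.univ_eq_empty]
      omega
    haveI := hne
    obtain ⟨v, hv⟩ := G.exists_maximal_degree_vertex
    have hdeg : 0 < G.degree v := by omega
    rw [← SimpleGraph.card_neighborFinset_eq_degree] at hdeg
    obtain ⟨u, hu⟩ := Finset.card_pos.1 hdeg
    have hadj : G.Adj v u := (G.mem_neighborFinset v u).1 hu
    apply hclique
    refine ⟨{v, u}, ?_, ?_⟩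
    · rw [Finset.card_insert_of_notMem (by simp [G.ne_of_adj hadj]),
        Finset.card_singleton, hD]
    · intro x hx y hy hxy
      simp only [Finset.coe_insert, Set.mem_insert_iff, Finset.coe_singleton,
        Set.mem_singleton_iff] at hx hy
      rcases hx with rfl | rfl <;> rcases hy with rfl | rfl
      · exact absurd rfl hxy
      · exact hadj
      · exact hadj.symm
      · exact absurd rfl hxy
  rcases Nat.lt_or_ge G.maxDegree 3 with hD2' | hD3
  · -- maxDegree = 2 : bipartite case
    have hD : G.maxDegree = 2 := by omega
    have hno : ∀ (v : V) (c : G.Walk v v), c.IsCycle → ¬ Odd c.length := by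
      intro v c hc hoc
      exact (hodd hD) ⟨v, c, hc, hoc⟩
    have hwalk : ∀ (v : V) (w : G.Walk v v), ¬ Odd w.length :=
      fun v w => Statement17.no_odd_closed_walk hno w.length v w rfl
    obtain ⟨c, hc⟩ := Statement17.exists_good_two hwalk
    rw [hD]
    exact Statement17.indep_of_good (by omega) c hc
  · -- maxDegree ≥ 3 : Brooks
    have hcl : ∀ t : Finset V, t.card = G.maxDegree + 1 → ¬ G.IsClique (↑t : Set V) :=
      fun t h hc => hclique ⟨t, h, hc⟩
    have hdeg : ∀ u ∈ (Finset.univ : Finset V),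
        ((Finset.univ : Finset V).filter (fun z => G.Adj u z)).card ≤ G.maxDegree := by
      intro u _
      have h1 := G.degree_le_maxDegree u
      have h2 : G.neighborFinset u = Finset.univ.filter (fun z => G.Adj u z) :=
        G.neighborFinset_eq_filter
      have h3 : G.degree u = (Finset.univ.filter (fun z => G.Adj u z)).card := by
        rw [← h2]
        rfl
      omega
    obtain ⟨c, hcgood⟩ := Statement17.brooks hD3 hcl (Finset.univ : Finset V).card
      Finset.univ le_rfl hdeg
    exact Statement17.indep_of_good (by omega) c hcgood
end

section
/- Let H and G₂ be graphs on a common vertex set with H + G₂ a near-packing with respect to a vertex y of minimum positive degree δ₊ in H, chosen among all such near-packings to minimize the number of bad pairs. Let x form a bad pair with y, set G = H + G₂, I = V − (N_G[x] ∪ N_G[y]), and W = N_G[x] ∩ N_G[y] − {x,y}. Then for every vertex u ∈ I, N_H(u) ⊆ W. -/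
open SimpleGraph Finset

attribute [local instance] Classical.propDecidable

lemma key_exchange {V : Type} [Fintype V] (H G₂ : SimpleGraph V) (y x u w : V)
    (hnear : ∀ a b, H.Adj a b → G₂.Adj a b → a = y ∨ b = y)
    (hmin : ∀ (H' : SimpleGraph V) (y' : V),
      (∃ e : V ≃ V, ∀ v, H'.degree v = H.degree (e v)) →
      H'.degree y' = H.degree y →
      (∀ a b, H'.Adj a b → G₂.Adj a b → a = y' ∨ b = y') →
      (H.edgeFinset ∩ G₂.edgeFinset).card ≤ (H'.edgeFinset ∩ G₂.edgeFinset).card)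
    (hxy : H.Adj x y) (hxyb : G₂.Adj x y)
    (huw : H.Adj u w)
    (hux : u ≠ x) (huy : u ≠ y) (hwx : w ≠ x) (hwy : w ≠ y)
    (hxu : ¬ (H ⊔ G₂).Adj x u) (hyw : ¬ (H ⊔ G₂).Adj y w) : False := by
  have hxy' : x ≠ y := hxy.ne
  have huw' : u ≠ w := huw.ne
  have hxu' : x ≠ u := hux.symm
  have hyu' : y ≠ u := huy.symm
  have hxw' : x ≠ w := hwx.symm
  have hyw' : y ≠ w := hwy.symm
  have hyx' : y ≠ x := hxy'.symm
  have hwu' : w ≠ u := huw'.symm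
  have hHxu : ¬ H.Adj x u := fun h => hxu (Or.inl h)
  have hGxu : ¬ G₂.Adj x u := fun h => hxu (Or.inr h)
  have hHyw : ¬ H.Adj y w := fun h => hyw (Or.inl h)
  have hGyw : ¬ G₂.Adj y w := fun h => hyw (Or.inr h)
  set R : V → V → Prop := fun a b =>
    (H.Adj a b ∧ ¬((a = x ∧ b = y) ∨ (a = y ∧ b = x)) ∧
      ¬((a = u ∧ b = w) ∨ (a = w ∧ b = u))) ∨
    ((a = x ∧ b = u) ∨ (a = u ∧ b = x)) ∨
    ((a = y ∧ b = w) ∨ (a = w ∧ b = y)) with hR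
  have hRsymm : ∀ a b, R a b → R b a := by
    intro a b h
    rcases h with ⟨h1, h2, h3⟩ | h | h
    · exact Or.inl ⟨h1.symm, by tauto, by tauto⟩
    · exact Or.inr (Or.inl (by tauto))
    · exact Or.inr (Or.inr (by tauto))
  have hRne : ∀ a b, R a b → a ≠ b := by
    intro a b h
    rcases h with ⟨h1, _, _⟩ | (⟨ha, hb⟩ | ⟨ha, hb⟩) | (⟨ha, hb⟩ | ⟨ha, hb⟩)
    · exact h1.ne
    · subst ha; subst hb; exact hxu'
    · subst ha; subst hb; exact hux
    · subst ha; subst hb; exact hyw'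
    · subst ha; subst hb; exact hwy
  set H' : SimpleGraph V := SimpleGraph.fromRel R with hH'
  have hAdj : ∀ a b, H'.Adj a b ↔ R a b := by
    intro a b
    rw [hH', fromRel_adj]
    constructor
    · rintro ⟨_, h | h⟩
      · exact h
      · exact hRsymm b a h
    · intro h
      exact ⟨hRne a b h, Or.inl h⟩
  have hNx : H'.neighborFinset x = insert u ((H.neighborFinset x).erase y) := by
    ext b
    simp only [mem_neighborFinset, hAdj, hR, mem_insert, mem_erase, ne_eq]
    simp only [hxy', hxu', hxw', hyx', hyu', hyw', hux, huy, huw', hwx, hwy, hwu',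
      false_and, and_false, false_or, or_false, true_and, and_true, not_or, not_false_iff]
    tauto
  have hNy : H'.neighborFinset y = insert w ((H.neighborFinset y).erase x) := by
    ext b
    simp only [mem_neighborFinset, hAdj, hR, mem_insert, mem_erase, ne_eq]
    simp only [hxy', hxu', hxw', hyx', hyu', hyw', hux, huy, huw', hwx, hwy, hwu',
      false_and, and_false, false_or, or_false, true_and, and_true, not_or, not_false_iff]
    tauto
  have hNu : H'.neighborFinset u = insert x ((H.neighborFinset u).erase w) := by
    ext b
    simp only [mem_neighborFinset, hAdj, hR, mem_insert, mem_erase, ne_eq]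
    simp only [hxy', hxu', hxw', hyx', hyu', hyw', hux, huy, huw', hwx, hwy, hwu',
      false_and, and_false, false_or, or_false, true_and, and_true, not_or, not_false_iff]
    tauto
  have hNw : H'.neighborFinset w = insert y ((H.neighborFinset w).erase u) := by
    ext b
    simp only [mem_neighborFinset, hAdj, hR, mem_insert, mem_erase, ne_eq]
    simp only [hxy', hxu', hxw', hyx', hyu', hyw', hux, huy, huw', hwx, hwy, hwu',
      false_and, and_false, false_or, or_false, true_and, and_true, not_or, not_false_iff]
    tauto
  have hNother : ∀ v, v ≠ x → v ≠ y → v ≠ u → v ≠ w →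
      H'.neighborFinset v = H.neighborFinset v := by
    intro v h1 h2 h3 h4
    ext b
    simp only [mem_neighborFinset, hAdj, hR, ne_eq]
    simp only [h1, h2, h3, h4, false_and, and_false, false_or, or_false, true_and,
      and_true, not_or, not_false_iff]
  have deg_eq : ∀ v, H'.degree v = H.degree v := by
    intro v
    by_cases h1 : v = x
    · subst h1
      rw [SimpleGraph.degree, SimpleGraph.degree, hNx,
        card_insert_of_notMem (by
          simp only [mem_erase, mem_neighborFinset]
          rintro ⟨_, h⟩; exact hHxu h),
        card_erase_of_mem (by simpa [mem_neighborFinset] using hxy)]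
      have : 0 < (H.neighborFinset v).card :=
        card_pos.2 ⟨y, by simpa [mem_neighborFinset] using hxy⟩
      omega
    by_cases h2 : v = y
    · subst h2
      rw [SimpleGraph.degree, SimpleGraph.degree, hNy,
        card_insert_of_notMem (by
          simp only [mem_erase, mem_neighborFinset]
          rintro ⟨_, h⟩; exact hHyw h),
        card_erase_of_mem (by simpa [mem_neighborFinset] using hxy.symm)]
      have : 0 < (H.neighborFinset v).card :=
        card_pos.2 ⟨x, by simpa [mem_neighborFinset] using hxy.symm⟩
      omega
    by_cases h3 : v = u
    · subst h3
      rw [SimpleGraph.degree, SimpleGraph.degree, hNu,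
        card_insert_of_notMem (by
          simp only [mem_erase, mem_neighborFinset]
          rintro ⟨_, h⟩; exact hHxu h.symm),
        card_erase_of_mem (by simpa [mem_neighborFinset] using huw)]
      have : 0 < (H.neighborFinset v).card :=
        card_pos.2 ⟨w, by simpa [mem_neighborFinset] using huw⟩
      omega
    by_cases h4 : v = w
    · subst h4
      rw [SimpleGraph.degree, SimpleGraph.degree, hNw,
        card_insert_of_notMem (by
          simp only [mem_erase, mem_neighborFinset]
          rintro ⟨_, h⟩; exact hHyw h.symm),
        card_erase_of_mem (by simpa [mem_neighborFinset] using huw.symm)]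
      have : 0 < (H.neighborFinset v).card :=
        card_pos.2 ⟨u, by simpa [mem_neighborFinset] using huw.symm⟩
      omega
    · rw [SimpleGraph.degree, SimpleGraph.degree, hNother v h1 h2 h3 h4]
  have hnear' : ∀ a b, H'.Adj a b → G₂.Adj a b → a = y ∨ b = y := by
    intro a b hab hG
    rw [hAdj] at hab
    rcases hab with ⟨h1, _, _⟩ | (⟨ha, hb⟩ | ⟨ha, hb⟩) | (⟨ha, hb⟩ | ⟨ha, hb⟩)
    · exact hnear a b h1 hG
    · subst ha; subst hb; exact absurd hG hGxu
    · subst ha; subst hb; exact absurd hG.symm hGxu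
    · exact Or.inl ha
    · exact Or.inr hb
  have hsub : H'.edgeFinset ∩ G₂.edgeFinset ⊆
      (H.edgeFinset ∩ G₂.edgeFinset).erase s(x, y) := by
    intro e he
    induction e with
    | _ a b =>
      simp only [mem_inter, mem_edgeFinset, mem_edgeSet] at he
      obtain ⟨hab, hG⟩ := he
      rw [hAdj] at hab
      rcases hab with ⟨h1, h2, _⟩ | (⟨ha, hb⟩ | ⟨ha, hb⟩) | (⟨ha, hb⟩ | ⟨ha, hb⟩)
      · simp only [mem_erase, mem_inter, mem_edgeFinset, mem_edgeSet, ne_eq,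
          Sym2.eq_iff]
        exact ⟨h2, h1, hG⟩
      · subst ha; subst hb; exact absurd hG hGxu
      · subst ha; subst hb; exact absurd hG.symm hGxu
      · subst ha; subst hb; exact absurd hG hGyw
      · subst ha; subst hb; exact absurd hG.symm hGyw
  have hmem : s(x, y) ∈ H.edgeFinset ∩ G₂.edgeFinset := by
    simp only [mem_inter, mem_edgeFinset, mem_edgeSet]
    exact ⟨hxy, hxyb⟩
  have hlt : (H'.edgeFinset ∩ G₂.edgeFinset).card <
      (H.edgeFinset ∩ G₂.edgeFinset).card := by
    calc (H'.edgeFinset ∩ G₂.edgeFinset).card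
        ≤ ((H.edgeFinset ∩ G₂.edgeFinset).erase s(x, y)).card := card_le_card hsub
      _ < (H.edgeFinset ∩ G₂.edgeFinset).card := card_erase_lt_of_mem hmem
  have := hmin H' y ⟨Equiv.refl V, fun v => deg_eq v⟩ (deg_eq y) hnear'
  exact absurd hlt (not_lt.mpr (by convert this : (H.edgeFinset ∩ G₂.edgeFinset).card ≤ (H'.edgeFinset ∩ G₂.edgeFinset).card))

theorem statement_18 {V : Type} [Fintype V] (H G₂ : SimpleGraph V) (y x : V)
    (hydeg : 0 < H.degree y)
    (hymin : ∀ v, 0 < H.degree v → H.degree y ≤ H.degree v)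
    (hnear : ∀ u v, H.Adj u v → G₂.Adj u v → u = y ∨ v = y)
    (hmin : ∀ (H' : SimpleGraph V) (y' : V),
      (∃ e : V ≃ V, ∀ v, H'.degree v = H.degree (e v)) →
      H'.degree y' = H.degree y →
      (∀ u v, H'.Adj u v → G₂.Adj u v → u = y' ∨ v = y') →
      (H.edgeFinset ∩ G₂.edgeFinset).card ≤ (H'.edgeFinset ∩ G₂.edgeFinset).card)
    (hbad : H.Adj x y ∧ G₂.Adj x y) :
    ∀ u, u ≠ x → u ≠ y → ¬ (H ⊔ G₂).Adj x u → ¬ (H ⊔ G₂).Adj y u →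
      ∀ w, H.Adj u w →
        (H ⊔ G₂).Adj x w ∧ (H ⊔ G₂).Adj y w ∧ w ≠ x ∧ w ≠ y := by
  intro u hux huy hxu hyu w huw
  obtain ⟨hxy, hxyb⟩ := hbad
  have hwx : w ≠ x := by
    rintro rfl
    exact hxu (Or.inl huw.symm)
  have hwy : w ≠ y := by
    rintro rfl
    exact hyu (Or.inl huw.symm)
  refine ⟨?_, ?_, hwx, hwy⟩
  · by_contra h
    exact key_exchange H G₂ y x w u hnear hmin hxy hxyb huw.symm hwx hwy hux huy h hyu
  · by_contra h
    exact key_exchange H G₂ y x u w hnear hmin hxy hxyb huw hux huy hwx hwy hxu h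
end
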